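/- arXiv:2001.03471 — 4 statements merged into one kernel-verified Lean document; each statement's English description precedes it below -/
import Mathlib

section
/- Let p be an odd prime. Then q_p(2) ≡ 2(N_{p-2} − 1) + 1 (mod p), i.e. the Fermat quotient of 2 is congruent modulo p to one plus twice the number of permutations of {1,…,p−2} with an even number of ascents and distinct from the identity. -/
/-- The number of ascents of a permutation of `Fin n` (positions `i` with `σ i < σ (i+1)`). -/
def numAscents {n : ℕ} (σ : Equiv.Perm (Fin n)) : ℕ :=
  (Finset.univ.filter (fun i : Fin (n - 1) =>
    σ ⟨i.val, by have := i.isLt; omega⟩ < σ ⟨i.val + 1, by have := i.isLt; omega⟩)).card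

/-- The number of permutations of `Fin n` with an even number of ascents. -/
def evenAscentPerms (n : ℕ) : ℕ :=
  (Finset.univ.filter (fun σ : Equiv.Perm (Fin n) => Even (numAscents σ))).card

/-- The Eulerian number `E(n, m)`: permutations of `Fin n` with exactly `m` ascents. -/
def eulerian (n m : ℕ) : ℕ :=
  (Finset.univ.filter (fun σ : Equiv.Perm (Fin n) => numAscents σ = m)).card

/-- `x ≡ 0 (mod p^k)` for a rational `x`: either `x = 0` or the `p`-adic valuation
of `x` is at least `k`. -/
def PadicDvd (p k : ℕ) (x : ℚ) : Prop :=
  x = 0 ∨ (k : ℤ) ≤ padicValRat p x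

open Finset

/-- Number of strictly monotone maps `Fin n → Fin N`. -/
lemma card_strictMono_fin (n N : ℕ) :
    Fintype.card {f : Fin n → Fin N // StrictMono f} = N.choose n := by
  classical
  have e : {f : Fin n → Fin N // StrictMono f} ≃ {s : Finset (Fin N) // s.card = n} :=
    { toFun := fun f => ⟨Finset.univ.image f.1, by
        rw [Finset.card_image_of_injective _ f.2.injective, Finset.card_univ, Fintype.card_fin]⟩
      invFun := fun s => ⟨s.1.orderEmbOfFin s.2, (s.1.orderEmbOfFin s.2).strictMono⟩
      left_inv := fun f => Subtype.ext ((Finset.orderEmbOfFin_unique _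
        (fun x => Finset.mem_image_of_mem _ (Finset.mem_univ x)) f.2).symm)
      right_inv := fun s => Subtype.ext (by
        ext x
        simp only [Finset.mem_image, Finset.mem_univ, true_and]
        constructor
        · rintro ⟨i, rfl⟩; exact Finset.orderEmbOfFin_mem _ _ _
        · intro hx
          have h := Finset.range_orderEmbOfFin s.1 s.2
          rw [Set.ext_iff] at h
          exact (h x).2 hx) }
  rw [Fintype.card_congr e, Fintype.card_finset_len, Fintype.card_fin]

/-- Gap bound for strictly monotone maps between `Fin` types, on values. -/
lemma strictMono_val_gap {n N : ℕ} {f : Fin n → Fin N} (hf : StrictMono f) :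
    ∀ (d : ℕ) (i j : Fin n), i.1 + d = j.1 → (f i).1 + d ≤ (f j).1 := by
  intro d
  induction d with
  | zero =>
    intro i j h
    have : i = j := Fin.ext (by omega)
    subst this; omega
  | succ d ih =>
    intro i j h
    have hj := j.isLt
    have hmid : i.1 + d < n := by omega
    have h1 := ih i ⟨i.1 + d, hmid⟩ rfl
    have h2 : f ⟨i.1 + d, hmid⟩ < f j := hf (by rw [Fin.lt_def]; simp only [Fin.val_mk]; omega)
    rw [Fin.lt_def] at h2
    omega

/-- Transitive relations propagate from adjacent pairs. -/
lemma fin_rel_of_adj {n : ℕ} {α : Type*} {r : α → α → Prop}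
    (htr : ∀ a b c, r a b → r b c → r a c) (f : Fin n → α)
    (h : ∀ (j : ℕ) (hj : j + 1 < n), r (f ⟨j, by omega⟩) (f ⟨j + 1, hj⟩)) :
    ∀ i j : Fin n, i < j → r (f i) (f j) := by
  have key : ∀ (d : ℕ) (i j : Fin n), i.1 + (d + 1) = j.1 → r (f i) (f j) := by
    intro d
    induction d with
    | zero =>
      intro i j hij
      have hj := j.isLt
      have hj' : i.1 + 1 < n := by omega
      have : j = ⟨i.1 + 1, hj'⟩ := Fin.ext (by simp only [Fin.val_mk]; omega)
      rw [this]
      exact h i.1 hj'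
    | succ d ih =>
      intro i j hij
      have hj := j.isLt
      have hmid : i.1 + (d + 1) < n := by omega
      refine htr _ _ _ (ih i ⟨i.1 + (d + 1), hmid⟩ rfl) ?_
      have h2 := h (i.1 + (d + 1)) (by omega)
      have : j = ⟨i.1 + (d + 1) + 1, by omega⟩ := Fin.ext (by simp only [Fin.val_mk]; omega)
      rw [this]
      exact h2
  intro i j hij
  rw [Fin.lt_def] at hij
  exact key (j.1 - i.1 - 1) i j (by omega)

lemma fin_strictMono_of_adj {n N : ℕ} {f : Fin n → Fin N}
    (h : ∀ (j : ℕ) (hj : j + 1 < n), f ⟨j, by omega⟩ < f ⟨j + 1, hj⟩) : StrictMono f :=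
  fun i j hij => fin_rel_of_adj (r := (· < ·)) (fun _ _ _ h1 h2 => lt_trans h1 h2) f h i j hij

lemma fin_monotone_of_adj {n N : ℕ} {f : Fin n → Fin N}
    (h : ∀ (j : ℕ) (hj : j + 1 < n), f ⟨j, by omega⟩ ≤ f ⟨j + 1, hj⟩) : Monotone f := by
  intro i j hij
  rcases eq_or_lt_of_le hij with heq | hlt
  · rw [heq]
  · exact fin_rel_of_adj (r := (· ≤ ·)) (fun _ _ _ h1 h2 => le_trans h1 h2) f h i j hlt

set_option maxHeartbeats 1000000 in
open scoped Classical in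
/-- Count of monotone maps `Fin n → Fin k` required to be strict at positions satisfying `Q`. -/
lemma count_mono_strict (n k : ℕ) (Q : ℕ → Prop) [DecidablePred Q] :
    Fintype.card {g : Fin n → Fin k //
        Monotone g ∧ ∀ (j : ℕ) (h : j + 1 < n), Q j →
          g ⟨j, by omega⟩ < g ⟨j + 1, h⟩} =
      (k + ((Finset.range (n-1)).filter (fun j => ¬ Q j)).card).choose n := by
  set a := ((Finset.range (n-1)).filter (fun j => ¬ Q j)).card with ha
  set t : ℕ → ℕ := fun j => if j < n - 1 ∧ ¬ Q j then 1 else 0 with ht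
  set c : ℕ → ℕ := fun m => ∑ j ∈ Finset.range m, t j with hc
  clear_value a t c
  have haub : a ≤ n - 1 := by
    rw [ha]
    exact le_trans (Finset.card_filter_le _ _) (le_of_eq (Finset.card_range _))
  have ht_le : ∀ j, t j ≤ 1 := by intro j; simp only [ht]; split <;> omega
  have ht_zero : ∀ j, n - 1 ≤ j → t j = 0 := by
    intro j hj; simp only [ht]; rw [if_neg]; omega
  have ht_Q : ∀ j, Q j → t j = 0 := by
    intro j hj; simp only [ht]; rw [if_neg]; tauto
  have ht_one : ∀ j, j < n - 1 → ¬ Q j → t j = 1 := by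
    intro j h1 h2; simp only [ht]; rw [if_pos]; exact ⟨h1, h2⟩
  have hc_succ : ∀ m, c (m+1) = c m + t m := by
    intro m; rw [hc]; exact Finset.sum_range_succ t m
  have hc_gap : ∀ m d, c (m + d) ≤ c m + d := by
    intro m d
    induction d with
    | zero => simp
    | succ d ih =>
      have h1 : m + (d + 1) = (m + d) + 1 := by omega
      rw [h1, hc_succ (m + d)]
      have := ht_le (m + d)
      omega
  have hc_mono : ∀ m m', m ≤ m' → c m ≤ c m' := by
    intro m m' h
    rw [hc]
    exact Finset.sum_le_sum_of_subset (Finset.range_subset_range.2 h)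
  have hca' : a = c (n - 1) := by
    rw [ha, hc, Finset.card_filter]
    exact Finset.sum_congr rfl fun j hj => by
      simp only [Finset.mem_range] at hj
      simp only [ht, hj, true_and]
  have hc_stab : ∀ m, n - 1 ≤ m → c m = a := by
    intro m hm
    rw [hca']
    induction m with
    | zero =>
      have h0 : n - 1 = 0 := by omega
      rw [h0]
    | succ m ih =>
      rcases Nat.lt_or_ge m (n-1) with h | h
      · have h1 : n - 1 = m + 1 := by omega
        rw [h1]
      · rw [hc_succ m, ht_zero m h, ih h]
        omega
  have hca : ∀ m, c m ≤ a := by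
    intro m
    rcases le_or_gt m (n-1) with h | h
    · rw [hca']; exact hc_mono _ _ h
    · rw [hc_stab m (by omega)]
  have hac : ∀ m, a ≤ c m + (n - 1 - m) := by
    intro m
    rcases le_or_gt m (n-1) with h | h
    · have h2 := hc_gap m (n - 1 - m)
      have hm : m + (n - 1 - m) = n - 1 := by omega
      rw [hm] at h2
      omega
    · rw [hc_stab m (by omega)]; omega
  have hc0 : ∀ m, c m ≤ m := by
    intro m
    have h1 := hc_gap 0 m
    have h2 : c 0 = 0 := by rw [hc]; exact Finset.sum_range_zero t
    rw [Nat.zero_add] at h1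
    omega
  have E : {g : Fin n → Fin k //
        Monotone g ∧ ∀ (j : ℕ) (h : j + 1 < n), Q j →
          g ⟨j, by omega⟩ < g ⟨j + 1, h⟩} ≃ {h : Fin n → Fin (k + a) // StrictMono h} :=
    { toFun := fun g => ⟨fun i => ⟨g.1 i + c i.1, by
        have h1 := (g.1 i).isLt
        have h2 := hca i.1
        omega⟩, by
        apply fin_strictMono_of_adj
        intro j hj
        dsimp only
        rw [Fin.lt_def]
        simp only [Fin.val_mk]
        have hcs := hc_succ j
        by_cases hQ : Q j
        · have h3 := g.2.2 j hj hQ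
          rw [Fin.lt_def] at h3
          omega
        · have h1 : t j = 1 := ht_one j (by omega) hQ
          have h2 : g.1 ⟨j, by omega⟩ ≤ g.1 ⟨j+1, hj⟩ :=
            g.2.1 (by rw [Fin.le_def]; simp only [Fin.val_mk]; omega)
          rw [Fin.le_def] at h2
          omega⟩
      invFun := fun h => ⟨fun i => ⟨(h.1 i).1 - c i.1, by
        have hpos := i.isLt
        have hup := strictMono_val_gap h.2 (n - 1 - i.1) i ⟨n-1, by omega⟩
          (by simp only [Fin.val_mk]; omega)
        have hlt := (h.1 ⟨n-1, by omega⟩).isLt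
        have hlow := strictMono_val_gap h.2 i.1 ⟨0, by omega⟩ i
          (by simp only [Fin.val_mk]; omega)
        have h3 := hac i.1
        have h4 := hc0 i.1
        omega⟩, by
        apply fin_monotone_of_adj
        intro j hj
        dsimp only
        rw [Fin.le_def]
        simp only [Fin.val_mk]
        have h2 : h.1 ⟨j, by omega⟩ < h.1 ⟨j+1, hj⟩ :=
          h.2 (by rw [Fin.lt_def]; simp only [Fin.val_mk]; omega)
        rw [Fin.lt_def] at h2
        have hcs := hc_succ j
        have htl := ht_le j
        omega, by
        intro j hj hQ
        dsimp only
        rw [Fin.lt_def]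
        simp only [Fin.val_mk]
        have h2 : h.1 ⟨j, by omega⟩ < h.1 ⟨j+1, hj⟩ :=
          h.2 (by rw [Fin.lt_def]; simp only [Fin.val_mk]; omega)
        rw [Fin.lt_def] at h2
        have hcs := hc_succ j
        have htj : t j = 0 := ht_Q j hQ
        have hlow := strictMono_val_gap h.2 j ⟨0, by omega⟩ ⟨j, by omega⟩
          (by simp only [Fin.val_mk]; omega)
        have hc0j := hc0 j
        omega⟩
      left_inv := fun g => Subtype.ext (funext fun i => Fin.ext (by
        show (↑(g.1 i) + c ↑i) - c ↑i = ↑(g.1 i)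
        omega))
      right_inv := fun h => Subtype.ext (funext fun i => Fin.ext (by
        show (↑(h.1 i) - c ↑i) + c ↑i = ↑(h.1 i)
        have hlow := strictMono_val_gap h.2 i.1 ⟨0, lt_of_le_of_lt (Nat.zero_le _) i.isLt⟩ i
          (by simp only [Fin.val_mk]; omega)
        have := hc0 i.1
        omega)) }
  rw [Fintype.card_congr E, card_strictMono_fin]


open scoped Classical in
set_option maxHeartbeats 1000000 in
theorem worpitzky (n k : ℕ) :
    k ^ n = ∑ σ : Equiv.Perm (Fin n), (k + numAscents σ).choose n := by
  classical
  have h0 : k ^ n = Fintype.card (Fin n → Fin k) := by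
    rw [Fintype.card_fun]
    simp
  rw [h0, Fintype.card,
    Finset.card_eq_sum_card_fiberwise (f := fun f : Fin n → Fin k => Tuple.sort f)
      (t := Finset.univ) (fun x _ => Finset.mem_univ _)]
  refine Finset.sum_congr rfl fun σ _ => ?_
  -- total value function of σ
  set s : ℕ → ℕ := fun j => if hj : j < n then (σ ⟨j, hj⟩).1 else 0 with hs
  set Q : ℕ → Prop := fun j => s (j+1) < s j with hQdef
  have hsval : ∀ (j : ℕ) (hj : j < n), s j = (σ ⟨j, hj⟩).1 := by
    intro j hj; rw [hs]; simp only [dif_pos hj]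
  have hQiff : ∀ (j : ℕ) (hj : j + 1 < n),
      (Q j ↔ σ ⟨j+1, hj⟩ < σ ⟨j, by omega⟩) := by
    intro j hj
    rw [hQdef]
    simp only
    rw [hsval (j+1) hj, hsval j (by omega), Fin.lt_def]
  have hne : ∀ (j : ℕ) (hj : j + 1 < n), σ ⟨j, by omega⟩ ≠ σ ⟨j+1, hj⟩ := by
    intro j hj hcontra
    have := σ.injective hcontra
    rw [Fin.ext_iff] at this
    simp only [Fin.val_mk] at this
    omega
  have hstep : ∀ (f : Fin n → Fin k), Monotone (f ∘ σ) →
      (∀ (j : ℕ) (h : j + 1 < n), Q j → (f ∘ σ) ⟨j, by omega⟩ < (f ∘ σ) ⟨j+1, h⟩) →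
      ∀ (i j : Fin n), i.1 + 1 = j.1 → f (σ i) = f (σ j) → σ i < σ j := by
    intro f hmono hadj i j hij heq
    have hj' : i.1 + 1 < n := by have := j.isLt; omega
    have hjeq : j = ⟨i.1 + 1, hj'⟩ := Fin.ext (by simp only [Fin.val_mk]; omega)
    subst hjeq
    by_cases hQ : Q i.1
    · exfalso
      have hlt : f (σ ⟨i.1, by omega⟩) < f (σ ⟨i.1 + 1, hj'⟩) := hadj i.1 hj' hQ
      have hieq : (⟨i.1, by omega⟩ : Fin n) = i := Fin.ext rfl
      rw [hieq, heq] at hlt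
      exact lt_irrefl _ hlt
    · have h1 : ¬ (σ ⟨i.1 + 1, hj'⟩ < σ ⟨i.1, by omega⟩) := by
        rw [← hQiff i.1 hj']; exact hQ
      have h2 := hne i.1 hj'
      have hieq : (⟨i.1, by omega⟩ : Fin n) = i := Fin.ext rfl
      rw [hieq] at h1 h2
      rcases lt_or_gt_of_ne h2 with h | h
      · exact h
      · exact absurd h h1
  have key : ∀ f : Fin n → Fin k, Tuple.sort f = σ ↔
      (Monotone (f ∘ σ) ∧ ∀ (j : ℕ) (h : j + 1 < n), Q j →
        (f ∘ σ) ⟨j, by omega⟩ < (f ∘ σ) ⟨j+1, h⟩) := by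
    intro f
    rw [eq_comm, Tuple.eq_sort_iff]
    constructor
    · rintro ⟨hmono, hstrict⟩
      refine ⟨hmono, ?_⟩
      intro j hj hQ
      rw [hQiff j hj] at hQ
      have hle : (f ∘ σ) ⟨j, by omega⟩ ≤ (f ∘ σ) ⟨j+1, hj⟩ :=
        hmono (by rw [Fin.le_def]; simp only [Fin.val_mk]; omega)
      rcases eq_or_lt_of_le hle with heq | hlt
      · exfalso
        have h3 := hstrict ⟨j, by omega⟩ ⟨j+1, hj⟩
          (by rw [Fin.lt_def]; simp only [Fin.val_mk]; omega) heq
        exact absurd h3 (not_lt.2 (le_of_lt hQ))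
      · exact hlt
    · rintro ⟨hmono, hadj⟩
      refine ⟨hmono, ?_⟩
      have key2 : ∀ (d : ℕ) (i j : Fin n), i.1 + (d + 1) = j.1 →
          f (σ i) = f (σ j) → σ i < σ j := by
        intro d
        induction d with
        | zero => exact fun i j hij heq => hstep f hmono hadj i j (by omega) heq
        | succ d ih =>
          intro i j hij heq
          have hmid : i.1 + (d + 1) < n := by have := j.isLt; omega
          set m : Fin n := ⟨i.1 + (d + 1), hmid⟩ with hm
          have h1 : f (σ i) ≤ f (σ m) := hmono (by rw [Fin.le_def]; simp only [hm, Fin.val_mk]; omega)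
          have h2 : f (σ m) ≤ f (σ j) := hmono (by rw [Fin.le_def]; simp only [hm, Fin.val_mk]; omega)
          have h3 : f (σ i) = f (σ m) := le_antisymm h1 (by rw [heq]; exact h2)
          have h4 : f (σ m) = f (σ j) := by rw [← h3, heq]
          exact lt_trans (ih i m (by simp only [hm, Fin.val_mk]) h3)
            (hstep f hmono hadj m j (by simp only [hm, Fin.val_mk]; omega) h4)
      intro i j hij heq
      rw [Fin.lt_def] at hij
      exact key2 (j.1 - i.1 - 1) i j (by omega) heq
  -- fiber card
  have step1 : (Finset.univ.filter fun f : Fin n → Fin k => Tuple.sort f = σ).card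
      = Fintype.card {f : Fin n → Fin k // Tuple.sort f = σ} := (Fintype.card_subtype _).symm
  have E2 : {f : Fin n → Fin k // Tuple.sort f = σ} ≃
      {g : Fin n → Fin k // Monotone g ∧ ∀ (j : ℕ) (h : j + 1 < n), Q j →
        g ⟨j, by omega⟩ < g ⟨j + 1, h⟩} := by
    refine Equiv.subtypeEquiv
      (Equiv.arrowCongr (σ.symm : Fin n ≃ Fin n) (Equiv.refl (Fin k))) fun f => ?_
    have hE1 : (Equiv.arrowCongr (σ.symm : Fin n ≃ Fin n) (Equiv.refl (Fin k))) f = f ∘ σ := by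
      funext i
      simp [Equiv.arrowCongr]
    rw [hE1]
    exact key f
  have step4 : ((Finset.range (n-1)).filter (fun j => ¬ Q j)).card = numAscents σ := by
    rw [numAscents]
    refine Finset.card_bij (fun j hj => ⟨j, by
      simp only [Finset.mem_filter, Finset.mem_range] at hj; exact hj.1⟩) ?_ ?_ ?_
    · intro j hj
      simp only [Finset.mem_filter, Finset.mem_range] at hj
      obtain ⟨hj1, hj2⟩ := hj
      simp only [Finset.mem_filter, Finset.mem_univ, true_and]
      have hj1' : j + 1 < n := by omega
      have h1 : ¬ (σ ⟨j+1, hj1'⟩ < σ ⟨j, by omega⟩) := by rw [← hQiff j hj1']; exact hj2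
      have h2 := hne j hj1'
      rcases lt_or_gt_of_ne h2 with h | h
      · exact h
      · exact absurd h h1
    · intro j1 hj1 j2 hj2 heq
      rw [Fin.ext_iff] at heq
      simpa using heq
    · intro i hi
      simp only [Finset.mem_filter, Finset.mem_univ, true_and] at hi
      have hilt := i.isLt
      refine ⟨i.1, ?_, ?_⟩
      · simp only [Finset.mem_filter, Finset.mem_range]
        refine ⟨hilt, ?_⟩
        rw [hQiff i.1 (by omega)]
        intro hcon
        exact absurd (lt_trans hi hcon) (lt_irrefl _)
      · exact Fin.ext rfl
  rw [step1, Fintype.card_congr E2, ← step4]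
  convert count_mono_strict n k Q using 2

section Arith
variable {p : ℕ} [Fact p.Prime]

lemma my_sum_range_cast {M : Type*} [AddCommMonoid M] [NeZero p] (f : ZMod p → M) :
    ∑ i ∈ Finset.range p, f (i : ZMod p) = ∑ x : ZMod p, f x := by
  refine Finset.sum_nbij' (i := fun n => (n : ZMod p)) (j := fun x => x.val) ?_ ?_ ?_ ?_ ?_
  · intro a _; exact Finset.mem_univ _
  · intro x _; exact Finset.mem_range.2 (ZMod.val_lt x)
  · intro a ha; exact ZMod.val_cast_of_lt (Finset.mem_range.1 ha)
  · intro x _; exact ZMod.natCast_rightInverse x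
  · intro a _; rfl

lemma my_two_ne_zero (h3 : 3 ≤ p) : (2 : ZMod p) ≠ 0 := by
  have : ((2 : ℕ) : ZMod p) ≠ 0 := by
    rw [Ne, ZMod.natCast_eq_zero_iff]
    intro hdvd
    have := Nat.le_of_dvd (by norm_num) hdvd
    omega
  simpa using this

lemma my_sum_univ_zero (h3 : 3 ≤ p) : ∑ x : ZMod p, x = 0 := by
  haveI : NeZero p := ⟨by omega⟩
  have h1 := my_sum_range_cast (p := p) (fun x : ZMod p => x)
  rw [← h1]
  have h2 : ∑ i ∈ Finset.range p, ((i : ℕ) : ZMod p) = ((∑ i ∈ Finset.range p, i : ℕ) : ZMod p) :=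
    (Nat.cast_sum _ _).symm
  rw [h2]
  have h3' := Finset.sum_range_id_mul_two p
  have h4 : (((∑ i ∈ Finset.range p, i) * 2 : ℕ) : ZMod p) = ((p * (p - 1) : ℕ) : ZMod p) := by
    rw [h3']
  push_cast at h4
  rw [ZMod.natCast_self] at h4
  simp only [zero_mul] at h4
  rw [h2] at h4
  rcases mul_eq_zero.1 h4 with h | h
  · exact h
  · exact absurd h (my_two_ne_zero h3)

lemma my_sum_inv_zero (h3 : 3 ≤ p) : ∑ i ∈ Finset.range p, ((i : ZMod p))⁻¹ = 0 := by
  haveI : NeZero p := ⟨by omega⟩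
  rw [my_sum_range_cast (p := p) (fun x : ZMod p => x⁻¹)]
  have hinv : Function.Involutive (fun x : ZMod p => x⁻¹) := fun x => inv_inv x
  have := Equiv.sum_comp hinv.toPerm (fun x : ZMod p => x)
  simp only [Function.Involutive.coe_toPerm] at this
  rw [this]
  exact my_sum_univ_zero h3

lemma my_pow_sub_two (h3 : 3 ≤ p) {i : ℕ} (h0 : 0 < i) (hip : i < p) :
    ((i : ZMod p)) ^ (p - 2) = ((i : ZMod p))⁻¹ := by
  have hne : (i : ZMod p) ≠ 0 := by
    rw [Ne, ZMod.natCast_eq_zero_iff]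
    intro hdvd
    have := Nat.le_of_dvd h0 hdvd
    omega
  have h1 : (i : ZMod p) ^ (p - 2) * (i : ZMod p) = 1 := by
    rw [← pow_succ]
    have : p - 2 + 1 = p - 1 := by omega
    rw [this]
    exact ZMod.pow_card_sub_one_eq_one hne
  exact eq_inv_of_mul_eq_one_left h1

lemma my_choose_sub_one (j : ℕ) (hj : j ≤ p - 1) :
    (((p-1).choose j : ℕ) : ZMod p) = (-1) ^ j := by
  have hp := (Fact.out : p.Prime)
  induction j with
  | zero => simp
  | succ j ih =>
    have hj' : j ≤ p - 1 := by omega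
    have hlt : j + 1 < p := by have := hp.two_le; omega
    have hpa : (p-1).choose j + (p-1).choose (j+1) = p.choose (j+1) := by
      have h := Nat.choose_succ_succ (p - 1) j
      have hp1 : p - 1 + 1 = p := by have := hp.two_le; omega
      simp only [Nat.succ_eq_add_one] at h
      rw [hp1] at h
      omega
    have hdvd : p ∣ p.choose (j+1) := hp.dvd_choose_self (by omega) hlt
    have hcast : ((p.choose (j+1) : ℕ) : ZMod p) = 0 :=
      (ZMod.natCast_eq_zero_iff _ _).2 hdvd
    have h2 : (((p-1).choose j : ℕ) : ZMod p) + (((p-1).choose (j+1) : ℕ) : ZMod p) = 0 := by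
      rw [← Nat.cast_add, hpa, hcast]
    rw [ih hj'] at h2
    have : (((p-1).choose (j+1) : ℕ) : ZMod p) = -((-1)^j) := by linear_combination h2
    rw [this, pow_succ]
    ring

lemma my_wilson (h3 : 3 ≤ p) : (((p-2).factorial : ℕ) : ZMod p) = 1 := by
  have h1 : (((p-1).factorial : ℕ) : ZMod p) = -1 := ZMod.wilsons_lemma p
  have h2 : p - 1 = (p - 2) + 1 := by omega
  rw [h2, Nat.factorial_succ] at h1
  push_cast at h1
  have h4 : ((p - 2 : ℕ) : ZMod p) = -2 := by
    rw [Nat.cast_sub (by omega : 2 ≤ p), ZMod.natCast_self]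
    ring
  rw [h4] at h1
  have h5 : (-1 : ZMod p) * (((p-2).factorial : ℕ) : ZMod p) = -1 := by
    linear_combination h1
  have h6 := mul_left_cancel₀ (show (-1 : ZMod p) ≠ 0 by simp)
    (h5.trans (mul_one (-1 : ZMod p)).symm)
  exact h6
end Arith

section J
variable {p : ℕ} [Fact p.Prime]

lemma my_J (h3 : 3 ≤ p) (hoddp : p % 2 = 1) (m : ℕ) (hm : m ≤ p - 3) :
    ∑ i ∈ (Finset.range p).filter (fun i => Odd i), (((i+m).choose (p-2) : ℕ) : ZMod p)
      = (-1)^m := by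
  have hp := (Fact.out : p.Prime)
  set i0 := if m % 2 = 0 then p - 2 - m else p - 1 - m with hi0
  have hmem : i0 ∈ (Finset.range p).filter (fun i => Odd i) := by
    simp only [Finset.mem_filter, Finset.mem_range, Nat.odd_iff]
    rw [hi0]
    split <;> omega
  rw [Finset.sum_eq_single i0]
  · rw [hi0]
    by_cases hev : m % 2 = 0
    · rw [if_pos hev]
      have h1 : p - 2 - m + m = p - 2 := by omega
      rw [h1, Nat.choose_self]
      rw [show ((-1 : ZMod p))^m = 1 from Even.neg_one_pow (Nat.even_iff.2 hev)]
      simp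
    · rw [if_neg hev]
      have h1 : p - 1 - m + m = p - 1 := by omega
      rw [h1]
      have h2 : (p-1).choose (p-2) = p - 1 := by
        rw [show p - 2 = (p-1) - 1 from by omega, Nat.choose_symm (by omega),
          Nat.choose_one_right]
      rw [h2]
      have h4 : ((p - 1 : ℕ) : ZMod p) = -1 := by
        rw [Nat.cast_sub (by omega : 1 ≤ p), ZMod.natCast_self]; ring
      rw [h4, Odd.neg_one_pow (Nat.odd_iff.2 (by omega))]
  · intro b hb hbne
    simp only [Finset.mem_filter, Finset.mem_range, Nat.odd_iff] at hb
    obtain ⟨hblt, hbodd⟩ := hb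
    rcases lt_or_ge (b + m) (p-2) with hcase | hcase
    · rw [Nat.choose_eq_zero_of_lt hcase]
      simp
    rcases Nat.lt_or_ge (b+m) p with hcase2 | hcase2
    · exfalso
      by_cases hev : m % 2 = 0
      · rw [hi0, if_pos hev] at hbne
        omega
      · rw [hi0, if_neg hev] at hbne
        omega
    · have hs : b + m = p + (b + m - p) := by omega
      have hslt : b + m - p < p - 2 := by omega
      rw [hs, Nat.add_choose_eq]
      push_cast
      apply Finset.sum_eq_zero
      intro x hx
      rw [Finset.HasAntidiagonal.mem_antidiagonal] at hx
      rcases Nat.eq_zero_or_pos x.1 with h0 | hpos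
      · have hx2 : x.2 = p - 2 := by omega
        rw [hx2, Nat.choose_eq_zero_of_lt hslt]
        simp
      · have hdvd : p ∣ p.choose x.1 := hp.dvd_choose_self (by omega) (by omega)
        have hz : ((p.choose x.1 : ℕ) : ZMod p) = 0 :=
          (ZMod.natCast_eq_zero_iff _ _).2 hdvd
        rw [hz, zero_mul]
  · intro habs
    exact absurd hmem habs
end J



section T
variable {p : ℕ} [Fact p.Prime]

lemma my_T (h3 : 3 ≤ p) (hoddp : p % 2 = 1) :
    ∑ σ : Equiv.Perm (Fin (p-2)), ((-1 : ZMod p)) ^ (numAscents σ)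
      = ∑ i ∈ (Finset.range p).filter (fun i => Odd i), ((i : ZMod p))⁻¹ := by
  have hasc : ∀ σ : Equiv.Perm (Fin (p-2)), numAscents σ ≤ p - 3 := by
    intro σ
    have h1 : numAscents σ ≤ Finset.univ.card := Finset.card_filter_le _ _
    rw [Finset.card_univ, Fintype.card_fin] at h1
    omega
  calc ∑ σ : Equiv.Perm (Fin (p-2)), ((-1 : ZMod p)) ^ (numAscents σ)
      = ∑ σ : Equiv.Perm (Fin (p-2)), ∑ i ∈ (Finset.range p).filter (fun i => Odd i),
          (((i + numAscents σ).choose (p-2) : ℕ) : ZMod p) := by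
        refine Finset.sum_congr rfl fun σ _ => ?_
        exact (my_J h3 hoddp _ (hasc σ)).symm
    _ = ∑ i ∈ (Finset.range p).filter (fun i => Odd i), ∑ σ : Equiv.Perm (Fin (p-2)),
          (((i + numAscents σ).choose (p-2) : ℕ) : ZMod p) := Finset.sum_comm
    _ = ∑ i ∈ (Finset.range p).filter (fun i => Odd i), ((i : ZMod p))⁻¹ := by
        refine Finset.sum_congr rfl fun i hi => ?_
        simp only [Finset.mem_filter, Finset.mem_range] at hi
        obtain ⟨hilt, hiodd⟩ := hi
        have hipos : 0 < i := hiodd.pos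
        have hcast : ((i ^ (p-2) : ℕ) : ZMod p)
            = ∑ σ : Equiv.Perm (Fin (p-2)), (((i + numAscents σ).choose (p-2) : ℕ) : ZMod p) := by
          rw [worpitzky (p-2) i]
          push_cast
          rfl
        rw [← hcast]
        push_cast
        exact my_pow_sub_two h3 hipos hilt
end T



theorem fermat_quotient_two_eq_twice_even_ascent_perms_plus_one
    (p : ℕ) (hp : p.Prime) (hodd : Odd p) :
    ((2 ^ (p - 1) - 1) / (p : ℤ)) ≡
      2 * ((evenAscentPerms (p - 2) : ℤ) - 1) + 1 [ZMOD (p : ℤ)] := by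
  classical
  haveI : Fact p.Prime := ⟨hp⟩
  have hoddp : p % 2 = 1 := Nat.odd_iff.1 hodd
  have h3 : 3 ≤ p := by
    have := hp.two_le
    omega
  rw [← ZMod.intCast_eq_intCast_iff]
  -- notation
  set O : ZMod p := ∑ i ∈ (Finset.range p).filter (fun i => Odd i), ((i : ZMod p))⁻¹ with hO
  -- ===== Fermat quotient side =====
  have hdvd : (p:ℤ) ∣ 2^(p-1) - 1 := by
    rw [← ZMod.intCast_zmod_eq_zero_iff_dvd]
    push_cast
    rw [ZMod.pow_card_sub_one_eq_one (my_two_ne_zero h3)]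
    ring
  have hqz : (p:ℤ) * ((2^(p-1) - 1) / (p:ℤ)) = 2^(p-1) - 1 := Int.mul_ediv_cancel' hdvd
  -- the integer entries C(p,k)/p
  have hs1 : ∑ k ∈ Finset.Ico 1 p, p.choose k = 2^p - 2 := by
    have h1 : ∑ k ∈ Finset.range (p+1), p.choose k = 2^p := Nat.sum_range_choose p
    rw [Finset.sum_range_succ] at h1
    rw [Finset.range_eq_Ico] at h1
    rw [Finset.sum_eq_sum_Ico_succ_bot (by omega : 0 < p)] at h1
    have h2 : 2 ≤ 2^p := by
      calc 2 = 2^1 := by norm_num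
      _ ≤ 2^p := Nat.pow_le_pow_right (by norm_num) (by omega)
    simp only [Nat.choose_zero_right, Nat.choose_self, zero_add, Nat.zero_add] at h1
    omega
  have hF : ∀ k ∈ Finset.Ico 1 p, p * (p.choose k / p) = p.choose k := by
    intro k hk
    rw [Finset.mem_Ico] at hk
    exact Nat.mul_div_cancel' (hp.dvd_choose_self (by omega) hk.2)
  have hs2 : p * ∑ k ∈ Finset.Ico 1 p, (p.choose k / p) = 2^p - 2 := by
    rw [Finset.mul_sum, Finset.sum_congr rfl hF, hs1]
  have hz : (p:ℤ) * (∑ k ∈ Finset.Ico 1 p, ((p.choose k / p : ℕ) : ℤ)) = 2^p - 2 := by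
    have h2 : 2 ≤ 2^p := by
      calc 2 = 2^1 := by norm_num
      _ ≤ 2^p := Nat.pow_le_pow_right (by norm_num) (by omega)
    have := congrArg (Nat.cast : ℕ → ℤ) hs2
    push_cast [Nat.cast_sub h2] at this
    exact this
  have hpow : (2:ℤ)^p = 2^(p-1) * 2 := by
    rw [← pow_succ]
    congr 1
    omega
  have h2q : (p:ℤ) * (2 * ((2^(p-1) - 1) / (p:ℤ)))
      = (p:ℤ) * (∑ k ∈ Finset.Ico 1 p, ((p.choose k / p : ℕ) : ℤ)) := by
    rw [hz]
    have : (p:ℤ) * (2 * ((2^(p-1) - 1) / (p:ℤ))) = 2 * ((p:ℤ) * ((2^(p-1) - 1) / (p:ℤ))) := by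
      ring
    rw [this, hqz, hpow]
    ring
  have hpne : (p:ℤ) ≠ 0 := by
    simp only [Ne, Int.natCast_eq_zero]
    omega
  have hq2 : 2 * ((2^(p-1) - 1) / (p:ℤ)) = ∑ k ∈ Finset.Ico 1 p, ((p.choose k / p : ℕ) : ℤ) :=
    mul_left_cancel₀ hpne h2q
  -- cast to ZMod p
  have hq3 : (2 : ZMod p) * (((2^(p-1) - 1) / (p:ℤ) : ℤ) : ZMod p)
      = ∑ k ∈ Finset.Ico 1 p, ((p.choose k / p : ℕ) : ZMod p) := by
    have h5 := congrArg (Int.cast : ℤ → ZMod p) hq2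
    simp only [Int.cast_mul, Int.cast_sum, Int.cast_natCast, Int.cast_ofNat] at h5
    exact h5
  -- each term
  have hFk : ∀ k ∈ Finset.Ico 1 p, ((p.choose k / p : ℕ) : ZMod p)
      = (-1)^(k-1) * ((k : ZMod p))⁻¹ := by
    intro k hk
    rw [Finset.mem_Ico] at hk
    obtain ⟨hk1, hk2⟩ := hk
    have hkne : (k : ZMod p) ≠ 0 := by
      rw [Ne, ZMod.natCast_eq_zero_iff]
      intro hdvd'
      have := Nat.le_of_dvd (by omega) hdvd'
      omega
    -- ℕ identity : k * (C(p,k)/p) = C(p-1, k-1)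
    have hnat : k * (p.choose k / p) = (p-1).choose (k-1) := by
      have hid := Nat.add_one_mul_choose_eq (p-1) (k-1)
      rw [show p - 1 + 1 = p from by omega, show k - 1 + 1 = k from by omega] at hid
      -- hid : p * (p-1).choose (k-1) = p.choose k * k
      have hFk' : p * (p.choose k / p) = p.choose k :=
        Nat.mul_div_cancel' (hp.dvd_choose_self (by omega) hk2)
      have : p * (k * (p.choose k / p)) = p * ((p-1).choose (k-1)) := by
        calc p * (k * (p.choose k / p)) = k * (p * (p.choose k / p)) := by ring
        _ = k * p.choose k := by rw [hFk']
        _ = p * ((p-1).choose (k-1)) := by rw [mul_comm k (p.choose k)]; exact hid.symm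
      exact Nat.eq_of_mul_eq_mul_left (by omega) this
    have hcast : (k : ZMod p) * ((p.choose k / p : ℕ) : ZMod p)
        = (((p-1).choose (k-1) : ℕ) : ZMod p) := by
      rw [← Nat.cast_mul, hnat]
    rw [my_choose_sub_one (k-1) (by omega)] at hcast
    have : ((p.choose k / p : ℕ) : ZMod p)
        = (k : ZMod p)⁻¹ * ((k : ZMod p) * ((p.choose k / p : ℕ) : ZMod p)) := by
      rw [← mul_assoc, inv_mul_cancel₀ hkne, one_mul]
    rw [this, hcast]
    ring
  rw [Finset.sum_congr rfl hFk] at hq3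
  -- sum over Ico 1 p = sum over range p (term at 0 vanishes)
  have hext : ∑ k ∈ Finset.range p, ((-1 : ZMod p))^(k-1) * ((k : ZMod p))⁻¹
      = ∑ k ∈ Finset.Ico 1 p, ((-1 : ZMod p))^(k-1) * ((k : ZMod p))⁻¹ := by
    rw [Finset.range_eq_Ico, Finset.sum_eq_sum_Ico_succ_bot (by omega : 0 < p)]
    simp
  -- parity split
  have hsplit : ∑ k ∈ Finset.range p, ((-1 : ZMod p))^(k-1) * ((k : ZMod p))⁻¹
      = 2 * O := by
    rw [← Finset.sum_filter_add_sum_filter_not (Finset.range p) (fun k => Odd k)]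
    have hodds : ∑ k ∈ (Finset.range p).filter (fun k => Odd k),
        ((-1 : ZMod p))^(k-1) * ((k : ZMod p))⁻¹ = O := by
      rw [hO]
      refine Finset.sum_congr rfl fun k hk => ?_
      simp only [Finset.mem_filter, Finset.mem_range, Nat.odd_iff] at hk
      rw [Even.neg_one_pow (Nat.even_iff.2 (by omega)), one_mul]
    have hevens : ∑ k ∈ (Finset.range p).filter (fun k => ¬ Odd k),
        ((-1 : ZMod p))^(k-1) * ((k : ZMod p))⁻¹
        = ∑ k ∈ (Finset.range p).filter (fun k => ¬ Odd k), -(((k : ZMod p))⁻¹) := by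
      refine Finset.sum_congr rfl fun k hk => ?_
      simp only [Finset.mem_filter, Finset.mem_range, Nat.odd_iff] at hk
      rcases Nat.eq_zero_or_pos k with rfl | hkpos
      · simp
      · rw [Odd.neg_one_pow (Nat.odd_iff.2 (by omega))]
        ring
    rw [hodds, hevens]
    have hHzero : O + ∑ k ∈ (Finset.range p).filter (fun k => ¬ Odd k), ((k : ZMod p))⁻¹ = 0 := by
      rw [hO, Finset.sum_filter_add_sum_filter_not]
      exact my_sum_inv_zero h3
    rw [Finset.sum_neg_distrib]
    linear_combination -hHzero
  rw [← hext, hsplit] at hq3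
  have hqO : (((2^(p-1) - 1) / (p:ℤ) : ℤ) : ZMod p) = O :=
    mul_left_cancel₀ (my_two_ne_zero h3) hq3
  -- ===== permutation side =====
  have hsplitN : ∑ σ : Equiv.Perm (Fin (p-2)), ((-1 : ZMod p)) ^ (numAscents σ)
      = 2 * ((evenAscentPerms (p-2) : ℕ) : ZMod p) - (((p-2).factorial : ℕ) : ZMod p) := by
    rw [← Finset.sum_filter_add_sum_filter_not Finset.univ
      (fun σ : Equiv.Perm (Fin (p-2)) => Even (numAscents σ))]
    have he : ∑ σ ∈ Finset.univ.filter (fun σ : Equiv.Perm (Fin (p-2)) => Even (numAscents σ)),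
        ((-1 : ZMod p)) ^ (numAscents σ) = ((evenAscentPerms (p-2) : ℕ) : ZMod p) := by
      rw [evenAscentPerms]
      rw [Finset.sum_congr rfl (fun σ hσ => ?_), Finset.sum_const, nsmul_eq_mul, mul_one]
      exact Even.neg_one_pow (Finset.mem_filter.1 hσ).2
    have hcards : (Finset.univ.filter (fun σ : Equiv.Perm (Fin (p-2)) => Even (numAscents σ))).card
        + (Finset.univ.filter (fun σ : Equiv.Perm (Fin (p-2)) => ¬ Even (numAscents σ))).card
        = (p-2).factorial := by
      rw [Finset.card_filter_add_card_filter_not, Finset.card_univ, Fintype.card_perm,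
        Fintype.card_fin]
    have ho : ∑ σ ∈ Finset.univ.filter (fun σ : Equiv.Perm (Fin (p-2)) => ¬ Even (numAscents σ)),
        ((-1 : ZMod p)) ^ (numAscents σ)
        = (((Finset.univ.filter
            (fun σ : Equiv.Perm (Fin (p-2)) => ¬ Even (numAscents σ))).card : ℕ) : ZMod p)
          * (-1) := by
      rw [Finset.sum_congr rfl
        (fun σ hσ => Odd.neg_one_pow (Nat.not_even_iff_odd.1 (Finset.mem_filter.1 hσ).2)),
        Finset.sum_const, nsmul_eq_mul]
    rw [he, ho]
    have hcast := congrArg (Nat.cast : ℕ → ZMod p) hcards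
    push_cast at hcast
    have hdef : ((evenAscentPerms (p-2) : ℕ) : ZMod p)
        = (((Finset.univ.filter
            (fun σ : Equiv.Perm (Fin (p-2)) => Even (numAscents σ))).card : ℕ) : ZMod p) := rfl
    rw [hdef]
    linear_combination -hcast
  -- ===== combine =====
  have hT := my_T (p := p) h3 hoddp
  rw [hsplitN] at hT
  rw [my_wilson (p := p) h3] at hT
  rw [hqO]
  push_cast
  push_cast at hT
  linear_combination -hT
end

section
/- Let p be an odd prime. Then Σ_{k odd, 1 ≤ k ≤ (p−1)/2} 1/k ≡ (1/2)(1 − 2·N_{p-2}) (mod p), i.e. the sum of reciprocals of the odd integers up to (p−1)/2 is congruent modulo p to one half of (one minus twice the number of permutations of {1,…,p−2} with an even number of ascents). -/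
open Finset

/-- Boolean ascent test at natural index `j`. -/
def ascB {n : ℕ} (σ : Equiv.Perm (Fin n)) (j : ℕ) : Bool :=
  if h : j + 1 < n then decide (σ ⟨j, by omega⟩ < σ ⟨j + 1, h⟩) else false

lemma numAscents_eq {n : ℕ} (σ : Equiv.Perm (Fin n)) :
    numAscents σ = ((Finset.range (n - 1)).filter (fun j => ascB σ j)).card := by
  rw [numAscents, Finset.card_filter, Finset.card_filter]
  rw [← Fin.sum_univ_eq_sum_range (fun j => if ascB σ j then 1 else 0) (n-1)]
  refine Finset.sum_congr rfl (fun i _ => ?_)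
  have h1 : (i : ℕ) + 1 < n := by have := i.isLt; omega
  simp only [ascB, dif_pos h1]
  by_cases h : σ ⟨i.val, by omega⟩ < σ ⟨i.val + 1, h1⟩ <;> simp [h]

/-- Insertion of the maximum at position `idx`. -/
def insFun {m : ℕ} (idx : Fin (m+1)) (τ : Equiv.Perm (Fin m)) (i : Fin (m+1)) : Fin (m+1) :=
  if h : i.val < idx.val then ⟨τ ⟨i.val, by have := idx.isLt; omega⟩, by have := (τ ⟨i.val, by have := idx.isLt; omega⟩).isLt; omega⟩
  else if h2 : i.val = idx.val then ⟨m, by omega⟩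
  else ⟨τ ⟨i.val - 1, by have := i.isLt; omega⟩, by have := (τ ⟨i.val - 1, by have := i.isLt; omega⟩).isLt; omega⟩

lemma insFun_injective {m : ℕ} (idx : Fin (m+1)) (τ : Equiv.Perm (Fin m)) :
    Function.Injective (insFun idx τ) := by
  intro i i' h
  unfold insFun at h
  split_ifs at h
  all_goals rw [Fin.mk.injEq] at h
  all_goals first
    | exact Fin.ext (by omega)
    | exact absurd h (Nat.ne_of_lt (Fin.is_lt _))
    | exact absurd h.symm (Nat.ne_of_lt (Fin.is_lt _))
    | (have h5 := τ.injective (Fin.ext h)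
       rw [Fin.mk.injEq] at h5
       exact Fin.ext (by omega))

noncomputable def insPerm {m : ℕ} (idx : Fin (m+1)) (τ : Equiv.Perm (Fin m)) : Equiv.Perm (Fin (m+1)) :=
  Equiv.ofBijective _ (Finite.injective_iff_bijective.mp (insFun_injective idx τ))

lemma insPerm_apply {m : ℕ} (idx : Fin (m+1)) (τ : Equiv.Perm (Fin m)) (i : Fin (m+1)) :
    insPerm idx τ i = insFun idx τ i := rfl



lemma ascB_eq' {n : ℕ} (σ : Equiv.Perm (Fin n)) (j k : ℕ) (hk : k = j + 1) (h : k < n) (hj : j < n) :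
    ascB σ j = decide (σ ⟨j, hj⟩ < σ ⟨k, h⟩) := by subst hk; exact dif_pos h

lemma ascB_insPerm {m : ℕ} (idx : Fin (m+1)) (τ : Equiv.Perm (Fin m)) (j : ℕ) (hj : j < m) :
    ascB (insPerm idx τ) j =
      (if j + 1 < idx.val then ascB τ j
       else if j + 1 = idx.val then true
       else if j = idx.val then false
       else ascB τ (j-1)) := by
  have h1 : j + 1 < m + 1 := by omega
  rw [ascB_eq' (insPerm idx τ) j (j+1) rfl h1 (by omega)]
  rw [insPerm_apply, insPerm_apply]
  unfold insFun
  rcases lt_trichotomy (j+1) idx.val with hc | hc | hc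
  · rw [if_pos hc]
    rw [dif_pos (show (⟨j, by omega⟩ : Fin (m+1)).val < idx.val by simpa using by omega)]
    rw [dif_pos (show (⟨j+1, h1⟩ : Fin (m+1)).val < idx.val by simpa using hc)]
    rw [ascB_eq' τ j (j+1) rfl (by omega) (by omega)]
    first
      | rfl
      | simp only [Fin.mk_lt_mk, ← Fin.lt_def]
  · rw [if_neg (by omega), if_pos hc]
    rw [dif_pos (show (⟨j, by omega⟩ : Fin (m+1)).val < idx.val by simpa using by omega)]
    rw [dif_neg (show ¬(⟨j+1, h1⟩ : Fin (m+1)).val < idx.val by simpa using by omega)]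
    rw [dif_pos (show (⟨j+1, h1⟩ : Fin (m+1)).val = idx.val by simpa using hc)]
    simp only [Fin.mk_lt_mk, decide_eq_true_eq]
    exact (τ _).isLt
  · rcases Nat.lt_or_ge j idx.val with hc2 | hc2
    · omega
    · rcases Nat.eq_or_lt_of_le hc2 with hc3 | hc3
      · rw [if_neg (by omega), if_neg (by omega), if_pos hc3.symm]
        rw [dif_neg (show ¬(⟨j, by omega⟩ : Fin (m+1)).val < idx.val by simpa using by omega)]
        rw [dif_pos (show (⟨j, by omega⟩ : Fin (m+1)).val = idx.val by simpa using hc3.symm)]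
        rw [dif_neg (show ¬(⟨j+1, h1⟩ : Fin (m+1)).val < idx.val by simpa using by omega)]
        rw [dif_neg (show ¬(⟨j+1, h1⟩ : Fin (m+1)).val = idx.val by simpa using by omega)]
        simp only [Fin.mk_lt_mk, decide_eq_false_iff_not]
        exact fun h => absurd h (not_lt.mpr (τ _).isLt.le)
      · rw [if_neg (by omega), if_neg (by omega), if_neg (by omega)]
        rw [dif_neg (show ¬(⟨j, by omega⟩ : Fin (m+1)).val < idx.val by simpa using by omega)]
        rw [dif_neg (show ¬(⟨j, by omega⟩ : Fin (m+1)).val = idx.val by simpa using by omega)]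
        rw [dif_neg (show ¬(⟨j+1, h1⟩ : Fin (m+1)).val < idx.val by simpa using by omega)]
        rw [dif_neg (show ¬(⟨j+1, h1⟩ : Fin (m+1)).val = idx.val by simpa using by omega)]
        rw [ascB_eq' τ (j-1) j (by omega) (by omega) (by omega)]
        first
          | rfl
          | simp only [Fin.mk_lt_mk, ← Fin.lt_def]



lemma sum_ins_aux (f : ℕ → ℕ) (t m : ℕ) (ht : t ≤ m) (hf : ∀ j, m - 1 ≤ j → f j = 0) :
    (∑ j ∈ range m, (if j+1 < t then f j else if j+1 = t then 1 else if j = t then 0 else f (j-1)))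
      + (if t = 0 then 0 else f (t-1))
    = (∑ j ∈ range (m-1), f j) + (if t = 0 then 0 else 1) := by
  rcases Nat.eq_zero_or_pos t with rfl | htpos
  · simp only [if_pos rfl, add_zero]
    rcases Nat.eq_zero_or_pos m with rfl | hm
    · simp
    · obtain ⟨m', rfl⟩ : ∃ m', m = m' + 1 := ⟨m - 1, by omega⟩
      rw [Finset.sum_range_succ' _ m']
      simp
  · obtain ⟨s, rfl⟩ : ∃ s, t = s + 1 := ⟨t - 1, by omega⟩
    rw [if_neg (by omega), if_neg (by omega)]
    -- split LHS sum at t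
    have hsplit : (∑ j ∈ range m, (if j+1 < s+1 then f j else if j+1 = s+1 then 1 else if j = s+1 then 0 else f (j-1)))
        = (∑ j ∈ range (s+1), (if j+1 < s+1 then f j else if j+1 = s+1 then 1 else if j = s+1 then 0 else f (j-1)))
        + (∑ j ∈ Ico (s+1) m, (if j+1 < s+1 then f j else if j+1 = s+1 then 1 else if j = s+1 then 0 else f (j-1))) := by
      simp only [Finset.range_eq_Ico]
      exact (Finset.sum_Ico_consecutive _ (by omega) (by omega)).symm
    rw [hsplit]
    have hA : (∑ j ∈ range (s+1), (if j+1 < s+1 then f j else if j+1 = s+1 then 1 else if j = s+1 then 0 else f (j-1)))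
        = (∑ j ∈ range s, f j) + 1 := by
      rw [Finset.sum_range_succ]
      rw [if_neg (by omega), if_pos rfl]
      congr 1
      refine Finset.sum_congr rfl (fun j hj => ?_)
      rw [Finset.mem_range] at hj
      rw [if_pos (by omega)]
    have hB : (∑ j ∈ Ico (s+1) m, (if j+1 < s+1 then f j else if j+1 = s+1 then 1 else if j = s+1 then 0 else f (j-1)))
        = ∑ j ∈ Ico (s+1) (m-1), f j := by
      rw [Finset.sum_Ico_eq_sum_range, Finset.sum_Ico_eq_sum_range]
      rcases Nat.eq_or_lt_of_le ht with h | h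
      · rw [← h]
        simp
      · obtain ⟨u, hu⟩ : ∃ u, m - (s+1) = u + 1 := ⟨m - (s+1) - 1, by omega⟩
        rw [hu, Finset.sum_range_succ' _ u]
        rw [if_neg (by omega), if_neg (by omega), if_pos rfl, add_zero]
        have hu2 : m - 1 - (s+1) = u := by omega
        rw [hu2]
        refine Finset.sum_congr rfl (fun j hj => ?_)
        rw [if_neg (by omega), if_neg (by omega), if_neg (by omega)]
        all_goals congr 1
        all_goals omega
    rw [hA, hB]
    have hRHS : (∑ j ∈ range (m-1), f j) = (∑ j ∈ range s, f j) + (∑ j ∈ Ico s (m-1), f j) := by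
      simp only [Finset.range_eq_Ico]
      exact (Finset.sum_Ico_consecutive _ (by omega) (by omega)).symm
    rw [hRHS]
    have e : s + 1 - 1 = s := by omega
    rw [e]
    rcases Nat.lt_or_ge s (m-1) with h | h
    · rw [Finset.sum_eq_sum_Ico_succ_bot h f]
      ring
    · have h1 : Ico (s+1) (m-1) = ∅ := by
        rw [Finset.Ico_eq_empty_iff]
        omega
      have h2 : Ico s (m-1) = ∅ := by
        rw [Finset.Ico_eq_empty_iff]
        omega
      rw [h1, h2, hf s (by omega)]
      simp



lemma ascB_ge {m : ℕ} (τ : Equiv.Perm (Fin m)) (j : ℕ) (hj : m - 1 ≤ j) : ascB τ j = false := by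
  rw [ascB, dif_neg (by omega)]

/-- change in number of ascents when inserting the max at position `t`. -/
def chi {m : ℕ} (τ : Equiv.Perm (Fin m)) (t : ℕ) : ℕ :=
  if t = 0 then 0 else if ascB τ (t-1) then 0 else 1

lemma numAscents_le {m : ℕ} (τ : Equiv.Perm (Fin m)) : numAscents τ ≤ m - 1 := by
  rw [numAscents_eq]
  calc ((range (m-1)).filter (fun j => ascB τ j)).card ≤ (range (m-1)).card :=
        Finset.card_filter_le _ _
    _ = m - 1 := Finset.card_range _

lemma numAscents_insPerm {m : ℕ} (idx : Fin (m+1)) (τ : Equiv.Perm (Fin m)) :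
    numAscents (insPerm idx τ) = numAscents τ + chi τ idx.val := by
  have hf0 : ∀ j, m - 1 ≤ j → (if ascB τ j then 1 else 0) = 0 := by
    intro j hj; rw [ascB_ge τ j hj]; rfl
  have H := sum_ins_aux (fun j => if ascB τ j then 1 else 0) idx.val m
    (by have := idx.isLt; omega) hf0
  have hpt : ∀ j ∈ range m, (if ascB (insPerm idx τ) j then 1 else 0 : ℕ) =
      (if j+1 < idx.val then (if ascB τ j then 1 else 0)
       else if j+1 = idx.val then 1 else if j = idx.val then 0
       else (if ascB τ (j-1) then 1 else 0)) := by
    intro j hj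
    rw [ascB_insPerm idx τ j (mem_range.mp hj)]
    by_cases h1 : j + 1 < idx.val
    · simp only [if_pos h1]
    · simp only [if_neg h1]
      by_cases h2 : j + 1 = idx.val
      · simp only [if_pos h2]; rfl
      · simp only [if_neg h2]
        by_cases h3 : j = idx.val
        · simp only [if_pos h3]; rfl
        · simp only [if_neg h3]
  rw [numAscents_eq, numAscents_eq, Nat.add_sub_cancel, Finset.card_filter, Finset.card_filter]
  rw [Finset.sum_congr rfl hpt]
  unfold chi
  by_cases h0 : idx.val = 0
  · simp only [if_pos h0] at H ⊢
    simpa using H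
  · simp only [if_neg h0] at H ⊢
    by_cases ha : ascB τ (idx.val - 1) = true
    · simp only [ha, if_true] at H ⊢
      omega
    · simp only [Bool.not_eq_true] at ha
      simp only [ha, Bool.false_eq_true, if_false] at H ⊢
      omega

lemma sum_indicator_numAscents {m M : ℕ} (τ : Equiv.Perm (Fin m)) (hM : m - 1 ≤ M) :
    (∑ j ∈ range M, (if ascB τ j then 1 else 0)) = numAscents τ := by
  rw [numAscents_eq, Finset.card_filter]
  symm
  apply Finset.sum_subset (Finset.range_subset_range.mpr (by omega))
  intro x _ hx
  rw [Finset.mem_range, Nat.not_lt] at hx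
  rw [ascB_ge τ x hx]
  rfl

lemma chi_count {m : ℕ} (τ : Equiv.Perm (Fin m)) (k : ℕ) :
    (∑ t ∈ range (m+1), (if numAscents τ + chi τ t = k then 1 else 0)) =
      (if numAscents τ = k then numAscents τ + 1
       else if numAscents τ + 1 = k then m - numAscents τ else 0) := by
  set a := numAscents τ with ha
  have hsum0 : (∑ t ∈ range (m+1), (if chi τ t = 0 then 1 else 0)) = a + 1 := by
    rw [Finset.sum_range_succ' _ m]
    have h1 : ∀ j ∈ range m, (if chi τ (j+1) = 0 then 1 else 0) = (if ascB τ j then 1 else 0) := by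
      intro j _
      unfold chi
      rw [if_neg (show ¬(j+1 = 0) by omega)]
      simp only [Nat.add_sub_cancel]
      by_cases hb : ascB τ j = true <;> simp [hb]
    rw [Finset.sum_congr rfl h1, sum_indicator_numAscents (M := m) τ (by omega)]
    simp [chi, ha]
  have hchi01 : ∀ t, chi τ t = 0 ∨ chi τ t = 1 := by
    intro t; unfold chi; split_ifs <;> simp
  have htot : (∑ t ∈ range (m+1), (if chi τ t = 0 then 1 else 0))
      + (∑ t ∈ range (m+1), (if chi τ t = 1 then 1 else 0)) = m + 1 := by
    rw [← Finset.sum_add_distrib]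
    have : ∀ t ∈ range (m+1),
        ((if chi τ t = 0 then 1 else 0) + (if chi τ t = 1 then 1 else 0) : ℕ) = 1 := by
      intro t _
      rcases hchi01 t with h | h <;> rw [h] <;> simp
    rw [Finset.sum_congr rfl this]
    simp
  rcases eq_or_ne a k with hak | hak
  · rw [if_pos hak, ← hak, ← hsum0]
    refine Finset.sum_congr rfl (fun t _ => ?_)
    rcases hchi01 t with h | h <;> rw [h] <;> simp
  · rw [if_neg hak]
    rcases eq_or_ne (a+1) k with hak1 | hak1
    · rw [if_pos hak1]
      have h2 : (∑ t ∈ range (m+1), (if a + chi τ t = k then 1 else 0))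
          = (∑ t ∈ range (m+1), (if chi τ t = 1 then 1 else 0)) := by
        refine Finset.sum_congr rfl (fun t _ => ?_)
        rcases hchi01 t with h | h <;> rw [h] <;> simp <;> omega
      rw [h2]
      omega
    · rw [if_neg hak1]
      have : ∀ t ∈ range (m+1), (if a + chi τ t = k then 1 else 0) = 0 := by
        intro t _
        rcases hchi01 t with h | h <;> rw [h] <;> simp <;> omega
      rw [Finset.sum_congr rfl this]
      simp




lemma insPerm_val_lt {m : ℕ} (idx : Fin (m+1)) (τ : Equiv.Perm (Fin m)) (j : ℕ)
    (hj : j < m + 1) (h : j < idx.val) :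
    (insPerm idx τ ⟨j, hj⟩).val = (τ ⟨j, by have := idx.isLt; omega⟩).val := by
  rw [insPerm_apply]; unfold insFun
  rw [dif_pos (show (⟨j, hj⟩ : Fin (m+1)).val < idx.val from h)]

lemma insPerm_val_eq {m : ℕ} (idx : Fin (m+1)) (τ : Equiv.Perm (Fin m)) (j : ℕ)
    (hj : j < m + 1) (h : j = idx.val) :
    (insPerm idx τ ⟨j, hj⟩).val = m := by
  rw [insPerm_apply]; unfold insFun
  rw [dif_neg (show ¬(⟨j, hj⟩ : Fin (m+1)).val < idx.val by simp [h]),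
    dif_pos (show (⟨j, hj⟩ : Fin (m+1)).val = idx.val from h)]

lemma insPerm_val_gt {m : ℕ} (idx : Fin (m+1)) (τ : Equiv.Perm (Fin m)) (j : ℕ)
    (hj : j < m + 1) (h : idx.val < j) :
    (insPerm idx τ ⟨j, hj⟩).val = (τ ⟨j - 1, by omega⟩).val := by
  rw [insPerm_apply]; unfold insFun
  rw [dif_neg (show ¬(⟨j, hj⟩ : Fin (m+1)).val < idx.val by simp; omega),
    dif_neg (show ¬(⟨j, hj⟩ : Fin (m+1)).val = idx.val by simp; omega)]

lemma insPerm_injective (m : ℕ) :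
    Function.Injective (fun pr : Fin (m+1) × Equiv.Perm (Fin m) => insPerm pr.1 pr.2) := by
  rintro ⟨idx, τ⟩ ⟨idx', τ'⟩ h
  simp only at h
  have hidx : idx = idx' := by
    by_contra hne
    have h1 : (insPerm idx τ idx).val = m := by
      have := insPerm_val_eq idx τ idx.val idx.isLt rfl
      simpa using this
    have h2 : (insPerm idx' τ' idx).val ≠ m := by
      rcases Nat.lt_or_ge idx.val idx'.val with hc | hc
      · rw [show (idx : Fin (m+1)) = ⟨idx.val, idx.isLt⟩ from rfl,
          insPerm_val_lt idx' τ' idx.val idx.isLt hc]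
        exact Nat.ne_of_lt (τ' _).isLt
      · have hc2 : idx'.val < idx.val := by
          rcases Nat.eq_or_lt_of_le hc with h | h
          · exact absurd (Fin.ext h.symm) hne
          · exact h
        rw [show (idx : Fin (m+1)) = ⟨idx.val, idx.isLt⟩ from rfl,
          insPerm_val_gt idx' τ' idx.val idx.isLt hc2]
        exact Nat.ne_of_lt (τ' _).isLt
    rw [h] at h1
    exact h2 h1
  subst hidx
  have hτ : τ = τ' := by
    apply Equiv.ext
    intro j
    apply Fin.ext
    rcases Nat.lt_or_ge j.val idx.val with hc | hc
    · have h1 := insPerm_val_lt idx τ j.val (by omega) hc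
      have h2 := insPerm_val_lt idx τ' j.val (by omega) hc
      rw [h] at h1
      rw [h1] at h2
      exact h2
    · have hlt : j.val + 1 < m + 1 := by have := j.isLt; omega
      have h1 := insPerm_val_gt idx τ (j.val+1) hlt (by omega)
      have h2 := insPerm_val_gt idx τ' (j.val+1) hlt (by omega)
      rw [h] at h1
      rw [h1] at h2
      exact h2
  rw [hτ]

lemma insPerm_bijective (m : ℕ) :
    Function.Bijective (fun pr : Fin (m+1) × Equiv.Perm (Fin m) => insPerm pr.1 pr.2) := by
  rw [Fintype.bijective_iff_injective_and_card]
  refine ⟨insPerm_injective m, ?_⟩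
  simp [Fintype.card_perm, Fintype.card_prod, Nat.factorial_succ]

lemma eulerian_succ_sum (m k : ℕ) :
    eulerian (m+1) k = ∑ τ : Equiv.Perm (Fin m),
      (if numAscents τ = k then numAscents τ + 1
       else if numAscents τ + 1 = k then m - numAscents τ else 0) := by
  have hcard : (Finset.univ.filter
      (fun pr : Fin (m+1) × Equiv.Perm (Fin m) => numAscents (insPerm pr.1 pr.2) = k)).card
      = (Finset.univ.filter (fun σ : Equiv.Perm (Fin (m+1)) => numAscents σ = k)).card := by
    apply Finset.card_bij (fun pr _ => insPerm pr.1 pr.2)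
    · intro a ha
      simp only [Finset.mem_filter, Finset.mem_univ, true_and] at ha ⊢
      exact ha
    · intro a _ b _ hab
      exact insPerm_injective m hab
    · intro σ hσ
      simp only [Finset.mem_filter, Finset.mem_univ, true_and] at hσ
      obtain ⟨pr, hpr⟩ := (insPerm_bijective m).2 σ
      exact ⟨pr, by simp [Finset.mem_filter, hpr, hσ], hpr⟩
  rw [eulerian, ← hcard, Finset.card_filter]
  rw [Fintype.sum_prod_type]
  rw [Finset.sum_comm]
  refine Finset.sum_congr rfl (fun τ _ => ?_)
  have h1 : ∀ idx : Fin (m+1), (if numAscents (insPerm idx τ) = k then (1:ℕ) else 0)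
      = (if numAscents τ + chi τ idx.val = k then 1 else 0) := by
    intro idx; rw [numAscents_insPerm]
  rw [Finset.sum_congr rfl (fun idx _ => h1 idx)]
  rw [Fin.sum_univ_eq_sum_range (fun t => if numAscents τ + chi τ t = k then 1 else 0) (m+1)]
  exact chi_count τ k

lemma eulerian_succ_zero (m : ℕ) : eulerian (m+1) 0 = eulerian m 0 := by
  rw [eulerian_succ_sum, eulerian, Finset.card_filter]
  refine Finset.sum_congr rfl (fun τ _ => ?_)
  rcases eq_or_ne (numAscents τ) 0 with h | h
  · rw [if_pos h, if_pos h, h]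
  · rw [if_neg h, if_neg h, if_neg (by omega)]

lemma eulerian_succ (m k : ℕ) (hk : 1 ≤ k) :
    eulerian (m+1) k = (k+1) * eulerian m k + (m+1-k) * eulerian m (k-1) := by
  rw [eulerian_succ_sum]
  have h1 : ∀ τ : Equiv.Perm (Fin m),
      (if numAscents τ = k then numAscents τ + 1
       else if numAscents τ + 1 = k then m - numAscents τ else 0)
      = (if numAscents τ = k then k+1 else 0) + (if numAscents τ = k-1 then m+1-k else 0) := by
    intro τ
    split_ifs <;> omega
  rw [Finset.sum_congr rfl (fun τ _ => h1 τ), Finset.sum_add_distrib]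
  congr 1
  · rw [eulerian, ← Finset.sum_filter, Finset.sum_const, smul_eq_mul]
    ring
  · rw [eulerian, ← Finset.sum_filter, Finset.sum_const, smul_eq_mul]
    ring



lemma eulerian_eq_zero (n k : ℕ) (hk : 1 ≤ k) (hnk : n ≤ k) : eulerian n k = 0 := by
  rw [eulerian, Finset.card_eq_zero, Finset.filter_eq_empty_iff]
  intro σ _
  have := numAscents_le σ
  omega

lemma numAscents_of_le_one {n : ℕ} (hn : n ≤ 1) (σ : Equiv.Perm (Fin n)) : numAscents σ = 0 := by
  have := numAscents_le σ
  omega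

lemma eulerian_zero (k : ℕ) : eulerian 0 k = if k = 0 then 1 else 0 := by
  rcases eq_or_ne k 0 with rfl | hk
  · rw [if_pos rfl, eulerian]
    rw [Finset.filter_true_of_mem (fun σ _ => numAscents_of_le_one (by omega) σ)]
    rw [Finset.card_univ]
    simp
  · rw [if_neg hk]
    exact eulerian_eq_zero 0 k (by omega) (by omega)

/-- explicit formula candidate for Eulerian numbers -/
def Wf (n k : ℕ) : ℤ :=
  ∑ j ∈ range (k+1), (-1:ℤ)^j * ((n+1).choose j : ℤ) * ((k:ℤ) + 1 - (j:ℤ))^n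

lemma Wf_zero (k : ℕ) : Wf 0 k = if k = 0 then 1 else 0 := by
  have gen : ∀ k : ℕ, (∑ j ∈ range (k+1), (-1:ℤ)^j * (Nat.choose 1 j : ℤ)) =
      if k = 0 then 1 else 0 := by
    intro k
    induction k with
    | zero => simp
    | succ k ih =>
      rw [Finset.sum_range_succ, ih]
      rcases eq_or_ne k 0 with rfl | hk
      · norm_num
      · rw [if_neg hk, if_neg (by omega)]
        have : Nat.choose 1 (k+1) = 0 := Nat.choose_eq_zero_of_lt (by omega)
        rw [this]
        push_cast
        ring
  rw [Wf]
  simp only [pow_zero, mul_one]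
  simpa using gen k

lemma int_succ_mul_choose (n j : ℕ) :
    ((j:ℤ)+1) * ((n+1).choose (j+1) : ℤ) = ((n:ℤ)+1) * (n.choose j : ℤ) := by
  have h := congrArg (Nat.cast : ℕ → ℤ) (Nat.add_one_mul_choose_eq n j)
  push_cast [Nat.succ_eq_add_one] at h
  linear_combination -h

lemma int_sub_mul_choose (n j : ℕ) :
    ((n:ℤ)+1-(j:ℤ)) * ((n+1).choose j : ℤ) = ((n:ℤ)+1) * (n.choose j : ℤ) := by
  rcases le_or_gt j (n+1) with h | h
  · have h0 := Nat.choose_succ_right_eq (n+1) j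
    have h1 := Nat.add_one_mul_choose_eq n j
    have h2 := congrArg (Nat.cast : ℕ → ℤ) (h1.trans h0)
    push_cast [Nat.cast_sub h, Nat.succ_eq_add_one] at h2
    linear_combination -h2
  · have e1 : (n+1).choose j = 0 := Nat.choose_eq_zero_of_lt h
    have e2 : n.choose j = 0 := Nat.choose_eq_zero_of_lt (by omega)
    rw [e1, e2]
    push_cast
    ring



lemma Wf_succ_succ (n k : ℕ) :
    Wf (n+1) (k+1) = ((k:ℤ)+2) * Wf n (k+1) + ((n:ℤ)-(k:ℤ)) * Wf n k := by
  have e1 : Wf (n+1) (k+1)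
      = (∑ j ∈ range (k+2), (-1:ℤ)^j * ((n+1).choose j : ℤ) * ((k:ℤ)+2-(j:ℤ))^(n+1))
        - (∑ j ∈ range (k+1), (-1:ℤ)^j * ((n+1).choose j : ℤ) * ((k:ℤ)+1-(j:ℤ))^(n+1)) := by
    rw [Wf]
    rw [Finset.sum_range_succ' _ (k+1)]
    rw [Finset.sum_range_succ'
      (fun j => (-1:ℤ)^j * ((n+1).choose j : ℤ) * ((k:ℤ)+2-(j:ℤ))^(n+1)) (k+1)]
    have key : ∀ j ∈ range (k+1),
        (-1:ℤ)^(j+1) * (((n+1)+1).choose (j+1) : ℤ) * ((((k+1):ℕ):ℤ)+1-(((j+1):ℕ):ℤ))^(n+1)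
        = ((-1:ℤ)^(j+1) * ((n+1).choose (j+1) : ℤ) * ((k:ℤ)+2-(((j+1):ℕ):ℤ))^(n+1))
          - ((-1:ℤ)^j * ((n+1).choose j : ℤ) * ((k:ℤ)+1-(j:ℤ))^(n+1)) := by
      intro j _
      rw [Nat.choose_succ_succ (n+1) j]
      push_cast
      ring
    rw [Finset.sum_congr rfl key, Finset.sum_sub_distrib]
    simp only [Nat.choose_zero_right]
    push_cast
    ring
  have e2 : (∑ j ∈ range (k+2), (-1:ℤ)^j * ((n+1).choose j : ℤ) * ((k:ℤ)+2-(j:ℤ))^(n+1))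
      = ((k:ℤ)+2) * Wf n (k+1)
        + ((n:ℤ)+1) * (∑ j ∈ range (k+1), (-1:ℤ)^j * (n.choose j : ℤ) * ((k:ℤ)+1-(j:ℤ))^n) := by
    have split : ∀ j ∈ range (k+2), (-1:ℤ)^j * ((n+1).choose j : ℤ) * ((k:ℤ)+2-(j:ℤ))^(n+1)
        = ((k:ℤ)+2) * ((-1:ℤ)^j * ((n+1).choose j : ℤ) * ((k:ℤ)+2-(j:ℤ))^n)
          - ((-1:ℤ)^j * ((j:ℤ) * ((n+1).choose j : ℤ)) * ((k:ℤ)+2-(j:ℤ))^n) := by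
      intro j _
      ring
    rw [Finset.sum_congr rfl split, Finset.sum_sub_distrib, ← Finset.mul_sum]
    have hU : (∑ j ∈ range (k+2), (-1:ℤ)^j * ((j:ℤ) * ((n+1).choose j : ℤ)) * ((k:ℤ)+2-(j:ℤ))^n)
        = -(((n:ℤ)+1) * (∑ j ∈ range (k+1), (-1:ℤ)^j * (n.choose j : ℤ) * ((k:ℤ)+1-(j:ℤ))^n)) := by
      rw [Finset.sum_range_succ' _ (k+1)]
      have key : ∀ j ∈ range (k+1),
          (-1:ℤ)^(j+1) * ((((j+1):ℕ):ℤ) * ((n+1).choose (j+1) : ℤ)) * ((k:ℤ)+2-(((j+1):ℕ):ℤ))^n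
          = -(((n:ℤ)+1) * ((-1:ℤ)^j * (n.choose j : ℤ) * ((k:ℤ)+1-(j:ℤ))^n)) := by
        intro j _
        have h := int_succ_mul_choose n j
        push_cast
        linear_combination (-(1:ℤ))^(j+1) * ((k:ℤ)+1-(j:ℤ))^n * h
      rw [Finset.sum_congr rfl key]
      rw [Finset.sum_neg_distrib, ← Finset.mul_sum]
      push_cast
      ring
    rw [hU]
    have hW : Wf n (k+1) = ∑ j ∈ range (k+2), (-1:ℤ)^j * ((n+1).choose j : ℤ) * ((k:ℤ)+2-(j:ℤ))^n := by
      rw [Wf]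
      refine Finset.sum_congr rfl (fun j _ => ?_)
      push_cast
      ring
    rw [hW]
    ring
  have e3 : (∑ j ∈ range (k+1), (-1:ℤ)^j * ((n+1).choose j : ℤ) * ((k:ℤ)+1-(j:ℤ))^(n+1))
      = ((k:ℤ)-(n:ℤ)) * Wf n k
        + ((n:ℤ)+1) * (∑ j ∈ range (k+1), (-1:ℤ)^j * (n.choose j : ℤ) * ((k:ℤ)+1-(j:ℤ))^n) := by
    have split : ∀ j ∈ range (k+1), (-1:ℤ)^j * ((n+1).choose j : ℤ) * ((k:ℤ)+1-(j:ℤ))^(n+1)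
        = ((k:ℤ)-(n:ℤ)) * ((-1:ℤ)^j * ((n+1).choose j : ℤ) * ((k:ℤ)+1-(j:ℤ))^n)
          + ((-1:ℤ)^j * ((((n:ℤ)+1-(j:ℤ))) * ((n+1).choose j : ℤ)) * ((k:ℤ)+1-(j:ℤ))^n) := by
      intro j _
      ring
    rw [Finset.sum_congr rfl split, Finset.sum_add_distrib, ← Finset.mul_sum]
    have key : ∀ j ∈ range (k+1),
        (-1:ℤ)^j * ((((n:ℤ)+1-(j:ℤ))) * ((n+1).choose j : ℤ)) * ((k:ℤ)+1-(j:ℤ))^n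
        = ((n:ℤ)+1) * ((-1:ℤ)^j * (n.choose j : ℤ) * ((k:ℤ)+1-(j:ℤ))^n) := by
      intro j _
      linear_combination ((-1:ℤ)^j * ((k:ℤ)+1-(j:ℤ))^n) * int_sub_mul_choose n j
    rw [Finset.sum_congr rfl key, ← Finset.mul_sum]
    rw [Wf]
  linear_combination e1 + e2 - e3



lemma Wf_zero_right (m : ℕ) : Wf m 0 = 1 := by simp [Wf]

lemma eulerian_eq_Wf (n k : ℕ) : (eulerian n k : ℤ) = Wf n k := by
  induction n generalizing k with
  | zero =>
    rw [eulerian_zero, Wf_zero]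
    split_ifs <;> simp
  | succ n ih =>
    rcases eq_or_ne k 0 with rfl | hk
    · rw [eulerian_succ_zero, ih 0, Wf_zero_right, Wf_zero_right]
    · obtain ⟨k', rfl⟩ : ∃ k', k = k'+1 := ⟨k-1, by omega⟩
      rw [Wf_succ_succ, ← ih (k'+1), ← ih k']
      rw [eulerian_succ n (k'+1) (by omega)]
      simp only [Nat.add_sub_cancel]
      rcases le_or_gt k' n with h | h
      · have h2 : n + 1 - (k'+1) = n - k' := by omega
        rw [h2]
        push_cast [Nat.cast_sub h]
        ring
      · have hz : eulerian n k' = 0 := eulerian_eq_zero n k' (by omega) (by omega)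
        have hz2 : n + 1 - (k'+1) = 0 := by omega
        rw [hz, hz2]
        push_cast
        ring



/-- partial harmonic sum in `ZMod p` -/
def Hh (p t : ℕ) : ZMod p := ∑ i ∈ Icc 1 t, (i : ZMod p)⁻¹

lemma choose_p_sub_one (p : ℕ) (hp : p.Prime) (j : ℕ) (hj : j ≤ p - 1) :
    (((p-1).choose j : ℕ) : ZMod p) = (-1)^j := by
  induction j with
  | zero => simp
  | succ j ih =>
    obtain ⟨q, rfl⟩ : ∃ q, p = q + 1 := ⟨p-1, by have := hp.two_le; omega⟩
    simp only [Nat.add_sub_cancel] at *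
    have h1 : (((q+1).choose (j+1) : ℕ) : ZMod (q+1)) = 0 := by
      rw [ZMod.natCast_eq_zero_iff]
      exact Nat.Prime.dvd_choose_self hp (by omega) (by have := hp.two_le; omega)
    have hcast := congrArg (Nat.cast : ℕ → ZMod (q+1)) (Nat.choose_succ_succ q j)
    push_cast at hcast
    rw [h1, ih (by omega)] at hcast
    linear_combination -hcast

lemma inv_eq_pow (p : ℕ) (hp : p.Prime) (m : ℕ) (h : (m : ZMod p) ≠ 0) :
    ((m : ZMod p))^(p-2) = (m : ZMod p)⁻¹ := by
  haveI := Fact.mk hp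
  have h1 : ((m : ZMod p))^(p-2) * (m : ZMod p) = 1 := by
    rw [← pow_succ, (by have := hp.two_le; omega : p-2+1 = p-1)]
    exact ZMod.pow_card_sub_one_eq_one h
  exact eq_inv_of_mul_eq_one_left h1

lemma eulerian_cast (p : ℕ) (hp : p.Prime) (hp3 : 3 ≤ p) (k : ℕ) (hk : k + 1 ≤ p - 2) :
    ((eulerian (p-2) k : ℕ) : ZMod p) = Hh p (k+1) := by
  haveI := Fact.mk hp
  have h0 : ((eulerian (p-2) k : ℤ) : ZMod p) = ((Wf (p-2) k : ℤ) : ZMod p) := by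
    rw [eulerian_eq_Wf]
  rw [Int.cast_natCast] at h0
  rw [h0, Wf]
  push_cast
  rw [(by omega : p - 2 + 1 = p - 1)]
  have key : ∀ j ∈ range (k+1),
      (-1:ZMod p)^j * ((p-1).choose j : ZMod p) * ((k:ZMod p)+1-(j:ZMod p))^(p-2)
      = (((k+1-j : ℕ)) : ZMod p)⁻¹ := by
    intro j hj
    rw [mem_range] at hj
    rw [choose_p_sub_one p hp j (by omega)]
    have hx : ((k+1-j : ℕ) : ZMod p) = (k:ZMod p)+1-(j:ZMod p) := by
      push_cast [Nat.cast_sub (by omega : j ≤ k+1)]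
      ring
    have hnz : ((k+1-j : ℕ) : ZMod p) ≠ 0 := by
      rw [Ne, ZMod.natCast_eq_zero_iff]
      intro hdvd
      have := Nat.le_of_dvd (by omega) hdvd
      omega
    rw [← hx, inv_eq_pow p hp _ hnz, ← mul_pow]
    norm_num
  rw [Finset.sum_congr rfl key]
  have key2 : ∀ j ∈ range (k+1),
      (((k+1-j : ℕ)) : ZMod p)⁻¹ = (fun i => (((i+1 : ℕ)) : ZMod p)⁻¹) (k + 1 - 1 - j) := by
    intro j hj
    rw [mem_range] at hj
    simp only []
    congr 2
    omega
  rw [Finset.sum_congr rfl key2]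
  rw [Finset.sum_range_reflect (fun i => (((i+1 : ℕ)) : ZMod p)⁻¹) (k+1)]
  rw [Hh]
  apply Finset.sum_nbij' (fun j => j + 1) (fun i => i - 1)
  · intro a ha; rw [mem_range] at ha; rw [mem_Icc]; omega
  · intro b hb; rw [mem_Icc] at hb; rw [mem_range]; omega
  · intro a _; omega
  · intro b hb; rw [mem_Icc] at hb; omega
  · intro a _; rfl

lemma zmod_inv_neg (p : ℕ) (hp : p.Prime) (x : ZMod p) : (-x)⁻¹ = -(x⁻¹) := by
  haveI := Fact.mk hp
  exact inv_neg

lemma Hh_p_sub_one (p : ℕ) (hp : p.Prime) (hodd : Odd p) : Hh p (p-1) = 0 := by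
  haveI := Fact.mk hp
  have h2 : (2 : ZMod p) ≠ 0 := by
    have h : ((2:ℕ) : ZMod p) ≠ 0 := by
      rw [Ne, ZMod.natCast_eq_zero_iff]
      intro h
      have := Nat.le_of_dvd (by omega) h
      have := hp.two_le
      rw [Nat.odd_iff] at hodd
      omega
    simpa using h
  have step : (∑ i ∈ Icc 1 (p-1), ((i:ZMod p))⁻¹)
      = ∑ i ∈ Icc 1 (p-1), (-((i : ZMod p)⁻¹)) := by
    apply Finset.sum_nbij' (fun i => p - i) (fun i => p - i)
    · intro a ha; rw [mem_Icc] at *; have := hp.two_le; omega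
    · intro a ha; rw [mem_Icc] at *; have := hp.two_le; omega
    · intro a ha; rw [mem_Icc] at ha; omega
    · intro a ha; rw [mem_Icc] at ha; omega
    · intro a ha
      rw [mem_Icc] at ha
      have hc : ((p - a : ℕ) : ZMod p) = - ((a:ℕ) : ZMod p) := by
        push_cast [Nat.cast_sub (by omega : a ≤ p)]
        simp [ZMod.natCast_self]
      rw [hc, zmod_inv_neg p hp, neg_neg]
  have hrev : Hh p (p-1) = - Hh p (p-1) := by
    conv_lhs => rw [Hh, step]
    conv_rhs => rw [Hh]
    exact Finset.sum_neg_distrib _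
  have h4 : (2 : ZMod p) * Hh p (p-1) = 0 := by linear_combination hrev
  rcases mul_eq_zero.mp h4 with h | h
  · exact absurd h h2
  · exact h



lemma zmod_mul_inv (p : ℕ) (hp : p.Prime) (x y : ZMod p) : (x*y)⁻¹ = x⁻¹ * y⁻¹ := by
  haveI := Fact.mk hp
  exact mul_inv x y

lemma zmod_two_ne_zero (p : ℕ) (hp : p.Prime) (hodd : Odd p) : (2 : ZMod p) ≠ 0 := by
  have h : ((2:ℕ) : ZMod p) ≠ 0 := by
    rw [Ne, ZMod.natCast_eq_zero_iff]
    intro h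
    have := Nat.le_of_dvd (by omega) h
    have := hp.two_le
    rw [Nat.odd_iff] at hodd
    omega
  simpa using h

lemma alt_H (p : ℕ) (hp : p.Prime) (r : ℕ) :
    (∑ k ∈ range (2*r+1), (-1:ZMod p)^k * Hh p (k+1))
      = Hh p (2*r+1) - (2:ZMod p)⁻¹ * Hh p r := by
  induction r with
  | zero => simp [Hh]
  | succ r ih =>
    rw [(by ring : 2*(r+1)+1 = (2*r+1)+1+1)]
    rw [Finset.sum_range_succ, Finset.sum_range_succ, ih]
    have h1 : Hh p ((2*r+1)+1) = Hh p (2*r+1) + (((2*r+1+1 : ℕ)):ZMod p)⁻¹ :=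
      Finset.sum_Icc_succ_top (by omega) _
    have h2 : Hh p ((2*r+1)+1+1) = Hh p ((2*r+1)+1) + (((2*r+1+1+1 : ℕ)):ZMod p)⁻¹ :=
      Finset.sum_Icc_succ_top (by omega) _
    have h3 : Hh p (r+1) = Hh p r + (((r+1 : ℕ)):ZMod p)⁻¹ :=
      Finset.sum_Icc_succ_top (by omega) _
    have h4 : (((2*r+1+1:ℕ)):ZMod p) = (2:ZMod p) * (((r+1:ℕ)):ZMod p) := by push_cast; ring
    have h5 : (((2*r+1+1:ℕ)):ZMod p)⁻¹ = (2:ZMod p)⁻¹ * (((r+1:ℕ)):ZMod p)⁻¹ := by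
      rw [h4, zmod_mul_inv p hp]
    have hpw1 : (-1:ZMod p)^(2*r+1) = -1 := Odd.neg_one_pow ⟨r, by ring⟩
    have hpw2 : (-1:ZMod p)^((2*r+1)+1) = 1 := Even.neg_one_pow ⟨r+1, by ring⟩
    rw [hpw1, hpw2, h1, h2, h3, h5]
    ring

lemma even_filter_sum (p : ℕ) (hp : p.Prime) (t : ℕ) :
    (∑ k ∈ (Icc 1 t).filter (fun k => ¬ Odd k), ((k : ZMod p))⁻¹)
      = (2:ZMod p)⁻¹ * Hh p (t/2) := by
  rw [Hh, Finset.mul_sum]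
  apply Finset.sum_nbij' (fun k => k / 2) (fun i => 2 * i)
  · intro a ha
    simp only [mem_filter, mem_Icc, Nat.odd_iff] at ha
    rw [mem_Icc]
    omega
  · intro b hb
    rw [mem_Icc] at hb
    simp only [mem_filter, mem_Icc, Nat.odd_iff]
    omega
  · intro a ha
    simp only [mem_filter, mem_Icc, Nat.odd_iff] at ha
    omega
  · intro b _
    omega
  · intro a ha
    simp only [mem_filter, mem_Icc, Nat.odd_iff] at ha
    have h2 : ((a:ℕ) : ZMod p) = (2:ZMod p) * (((a/2 : ℕ)) : ZMod p) := by
      have ha2 : a = 2 * (a / 2) := by omega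
      calc ((a:ℕ) : ZMod p) = ((2 * (a/2) : ℕ) : ZMod p) := by rw [← ha2]
        _ = _ := by push_cast; ring
    rw [h2, zmod_mul_inv p hp]

lemma odd_pair_sum (p : ℕ) (hp : p.Prime) (hodd : Odd p) :
    (∑ k ∈ (Icc 1 ((p-1)/2)).filter (fun k => Odd k), ((k : ZMod p))⁻¹)
      = - (∑ k ∈ (Ioc ((p-1)/2) (p-1)).filter (fun k => ¬ Odd k), ((k : ZMod p))⁻¹) := by
  rw [← Finset.sum_neg_distrib]
  apply Finset.sum_nbij' (fun k => p - k) (fun k => p - k)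
  · intro a ha
    simp only [mem_filter, mem_Icc, Nat.odd_iff] at ha
    simp only [mem_filter, mem_Ioc, Nat.odd_iff]
    have ho := Nat.odd_iff.mp hodd
    have := hp.two_le
    omega
  · intro b hb
    simp only [mem_filter, mem_Ioc, Nat.odd_iff] at hb
    simp only [mem_filter, mem_Icc, Nat.odd_iff]
    have ho := Nat.odd_iff.mp hodd
    have := hp.two_le
    omega
  · intro a ha
    simp only [mem_filter, mem_Icc] at ha
    have := hp.two_le
    omega
  · intro b hb
    simp only [mem_filter, mem_Ioc] at hb
    omega
  · intro a ha
    simp only [mem_filter, mem_Icc] at ha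
    have hc : ((p - a : ℕ) : ZMod p) = - ((a:ℕ) : ZMod p) := by
      push_cast [Nat.cast_sub (show a ≤ p by have := hp.two_le; omega)]
      simp [ZMod.natCast_self]
    rw [hc, zmod_inv_neg p hp, neg_neg]

lemma even_split (p : ℕ) (hp : p.Prime) :
    (∑ k ∈ (Icc 1 (p-1)).filter (fun k => ¬ Odd k), ((k : ZMod p))⁻¹)
      = (∑ k ∈ (Icc 1 ((p-1)/2)).filter (fun k => ¬ Odd k), ((k : ZMod p))⁻¹)
        + (∑ k ∈ (Ioc ((p-1)/2) (p-1)).filter (fun k => ¬ Odd k), ((k : ZMod p))⁻¹) := by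
  rw [Finset.sum_filter, Finset.sum_filter, Finset.sum_filter]
  have e1 : Icc 1 (p-1) = Ioc 0 (p-1) := Finset.Icc_add_one_left_eq_Ioc 0 (p-1)
  have e2 : Icc 1 ((p-1)/2) = Ioc 0 ((p-1)/2) := Finset.Icc_add_one_left_eq_Ioc 0 ((p-1)/2)
  rw [e1, e2]
  exact (Finset.sum_Ioc_consecutive _ (by omega) (by omega)).symm

lemma fact_p_sub_two (p : ℕ) (hp : p.Prime) (h3 : 3 ≤ p) :
    (((p-2).factorial : ℕ) : ZMod p) = 1 := by
  haveI := Fact.mk hp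
  have hw := ZMod.wilsons_lemma (p := p)
  rw [(by omega : p - 1 = (p-2) + 1), Nat.factorial_succ] at hw
  push_cast at hw
  have hc : ((p - 2 : ℕ) : ZMod p) = - 2 := by
    push_cast [Nat.cast_sub (show 2 ≤ p by omega)]
    simp [ZMod.natCast_self]
  rw [hc] at hw
  linear_combination -hw

lemma twoN (n : ℕ) (hn : 1 ≤ n) :
    2 * (evenAscentPerms n : ℤ) = (n.factorial : ℤ)
      + ∑ k ∈ range n, (-1:ℤ)^k * (eulerian n k : ℤ) := by
  have h1 : (∑ k ∈ range n, (-1:ℤ)^k * (eulerian n k : ℤ))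
      = ∑ σ : Equiv.Perm (Fin n), (-1:ℤ)^(numAscents σ) := by
    have e1 : ∀ k ∈ range n, (-1:ℤ)^k * (eulerian n k : ℤ)
        = ∑ σ : Equiv.Perm (Fin n), (if numAscents σ = k then (-1:ℤ)^k else 0) := by
      intro k _
      rw [eulerian, Finset.card_filter, Nat.cast_sum, Finset.mul_sum]
      refine Finset.sum_congr rfl (fun σ _ => ?_)
      split_ifs <;> simp
    rw [Finset.sum_congr rfl e1, Finset.sum_comm]
    refine Finset.sum_congr rfl (fun σ _ => ?_)
    rw [Finset.sum_eq_single_of_mem (numAscents σ)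
      (by rw [mem_range]; have := numAscents_le σ; omega)
      (fun b _ hb => by rw [if_neg (fun h => hb h.symm)])]
    simp
  rw [h1]
  rw [← Finset.sum_filter_add_sum_filter_not Finset.univ (fun σ => Even (numAscents σ))]
  have e2 : ∀ σ ∈ Finset.univ.filter (fun σ : Equiv.Perm (Fin n) => Even (numAscents σ)),
      (-1:ℤ)^(numAscents σ) = 1 := by
    intro σ hσ
    rw [mem_filter] at hσ
    exact Even.neg_one_pow hσ.2
  have e3 : ∀ σ ∈ Finset.univ.filter (fun σ : Equiv.Perm (Fin n) => ¬ Even (numAscents σ)),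
      (-1:ℤ)^(numAscents σ) = -1 := by
    intro σ hσ
    rw [mem_filter] at hσ
    exact Odd.neg_one_pow (Nat.not_even_iff_odd.mp hσ.2)
  rw [Finset.sum_congr rfl e2, Finset.sum_congr rfl e3, Finset.sum_const, Finset.sum_const]
  have hcards := Finset.card_filter_add_card_filter_not
    (s := (Finset.univ : Finset (Equiv.Perm (Fin n)))) (p := fun σ => Even (numAscents σ))
  rw [Finset.card_univ, Fintype.card_perm, Fintype.card_fin] at hcards
  have hc' : ((Finset.univ.filter (fun σ : Equiv.Perm (Fin n) => Even (numAscents σ))).card : ℤ)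
      + ((Finset.univ.filter (fun σ : Equiv.Perm (Fin n) => ¬ Even (numAscents σ))).card : ℤ)
      = (n.factorial : ℤ) := by exact_mod_cast hcards
  rw [evenAscentPerms]
  simp only [smul_eq_mul, nsmul_eq_mul]
  linear_combination hc'

lemma core_congruence (p : ℕ) (hp : p.Prime) (hodd : Odd p) :
    (2:ZMod p) * (∑ k ∈ (Icc 1 ((p-1)/2)).filter (fun k => Odd k), ((k : ZMod p))⁻¹)
      + 2 * ((evenAscentPerms (p-2) : ℕ) : ZMod p) = 1 := by
  haveI := Fact.mk hp
  have h3 : 3 ≤ p := by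
    have := hp.two_le
    rw [Nat.odd_iff] at hodd
    omega
  obtain ⟨r, hr⟩ : ∃ r, p - 2 = 2*r + 1 := ⟨(p-3)/2, by rw [Nat.odd_iff] at hodd; omega⟩
  have h2ne := zmod_two_ne_zero p hp hodd
  have h2inv : (2:ZMod p) * (2:ZMod p)⁻¹ = 1 := mul_inv_cancel₀ h2ne
  -- the alternating-sum evaluation
  have ht := twoN (p-2) (by omega)
  have htz := congrArg (Int.cast : ℤ → ZMod p) ht
  push_cast at htz
  rw [fact_p_sub_two p hp h3] at htz
  have hE : ∀ k ∈ range (p-2), (-1:ZMod p)^k * ((eulerian (p-2) k : ℕ) : ZMod p)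
      = (-1:ZMod p)^k * Hh p (k+1) := by
    intro k hk
    rw [mem_range] at hk
    rw [eulerian_cast p hp h3 k (by omega)]
  rw [Finset.sum_congr rfl hE] at htz
  have hAlt : (∑ k ∈ range (p-2), (-1:ZMod p)^k * Hh p (k+1))
      = Hh p (p-2) - (2:ZMod p)⁻¹ * Hh p r := by
    rw [hr]
    exact alt_H p hp r
  rw [hAlt] at htz
  -- Hh p (p-2) = 1
  have hval : (((p-2+1:ℕ)) : ZMod p) = -1 := by
    rw [(by omega : p-2+1 = p-1)]
    push_cast [Nat.cast_sub (show 1 ≤ p by omega)]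
    simp [ZMod.natCast_self]
  have hHp2 : Hh p (p-2) = 1 := by
    have h0 := Hh_p_sub_one p hp hodd
    have hH2 : Hh p (p-1) = Hh p (p-2) + (((p-2+1:ℕ)) : ZMod p)⁻¹ := by
      rw [(by omega : p - 1 = (p-2) + 1)]
      exact Finset.sum_Icc_succ_top (by omega) _
    rw [hH2, hval] at h0
    have hinv1 : ((-1 : ZMod p))⁻¹ = -1 := by
      rw [zmod_inv_neg p hp, inv_one]
    rw [hinv1] at h0
    linear_combination h0
  rw [hHp2] at htz
  -- Hh p ((p-1)/2) = Hh p r + (r+1)⁻¹ and (r+1)⁻¹ = -2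
  have hqr : (p-1)/2 = r + 1 := by rw [Nat.odd_iff] at hodd; omega
  have hHr : Hh p ((p-1)/2) = Hh p r + (((r+1:ℕ)) : ZMod p)⁻¹ := by
    rw [hqr]
    exact Finset.sum_Icc_succ_top (by omega) _
  have h2x : (2:ZMod p) * (((r+1:ℕ)) : ZMod p) = -1 := by
    have hpe : p = 2*(r+1)+1 := by omega
    have hz2 : ((2*(r+1)+1 : ℕ) : ZMod p) = ((p:ℕ) : ZMod p) := by rw [← hpe]
    have hz : ((2*(r+1)+1 : ℕ) : ZMod p) = 0 := by rw [hz2, ZMod.natCast_self]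
    push_cast at hz ⊢
    linear_combination hz
  have hxinv : (((r+1:ℕ)) : ZMod p)⁻¹ = -2 := by
    apply inv_eq_of_mul_eq_one_right
    linear_combination -h2x
  -- the harmonic pairing identities
  have f1 := Finset.sum_filter_add_sum_filter_not (Icc 1 ((p-1)/2)) (fun k => Odd k)
    (fun k => ((k : ZMod p))⁻¹)
  have f2b := even_filter_sum p hp (p-1)
  have f3 := odd_pair_sum p hp hodd
  have f4 := even_split p hp
  have hHdef : Hh p ((p-1)/2) = ∑ x ∈ Icc 1 ((p-1)/2), ((x : ZMod p))⁻¹ := rfl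
  linear_combination f1 + f3 + f4 - f2b + htz + (2:ZMod p)⁻¹ * hHr
    + (2:ZMod p)⁻¹ * hxinv - h2inv - (Hh p ((p-1)/2)) * h2inv - hHdef

theorem odd_harmonic_half_sum_eq_half_one_sub_twice_even_ascent_perms
    (p : ℕ) (hp : p.Prime) (hodd : Odd p) :
    PadicDvd p 1 ((∑ k ∈ (Finset.Icc 1 ((p - 1) / 2)).filter (fun k => Odd k), (1 : ℚ) / k) -
      (1 / 2) * (1 - 2 * (evenAscentPerms (p - 2) : ℚ))) := by
  haveI := Fact.mk hp
  have h3 : 3 ≤ p := by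
    have := hp.two_le
    rw [Nat.odd_iff] at hodd
    omega
  set X : ℚ := (∑ k ∈ (Finset.Icc 1 ((p - 1) / 2)).filter (fun k => Odd k), (1 : ℚ) / k) -
      (1 / 2) * (1 - 2 * (evenAscentPerms (p - 2) : ℚ)) with hXdef
  by_cases hx : X = 0
  · exact Or.inl hx
  refine Or.inr ?_
  set M : ℕ := ((p-1)/2).factorial with hMdef
  have hMpos : 0 < M := Nat.factorial_pos _
  have hDQ : ((2*M : ℕ) : ℚ) ≠ 0 := Nat.cast_ne_zero.mpr (by omega)
  set c : ℕ → ℕ := fun k => 2*(M / k) with hcdef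
  set a : ℤ := (∑ k ∈ (Finset.Icc 1 ((p - 1) / 2)).filter (fun k => Odd k),
      ((c k : ℕ) : ℤ)) + 2*(M:ℤ)*((evenAscentPerms (p-2) : ℕ):ℤ) - (M:ℤ) with hadef
  have hterm : ∀ k ∈ (Finset.Icc 1 ((p - 1) / 2)).filter (fun k => Odd k),
      ((1:ℚ)/(k:ℚ)) * ((2*M:ℕ):ℚ) = ((c k : ℕ) : ℚ) := by
    intro k hk
    rw [mem_filter, mem_Icc] at hk
    have hdvd : k ∣ M := Nat.dvd_factorial (by omega) hk.1.2
    have hk0 : (k:ℚ) ≠ 0 := Nat.cast_ne_zero.mpr (by omega)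
    simp only [hcdef]
    push_cast [Nat.cast_div hdvd hk0]
    field_simp
  have hxa : X * ((2*M:ℕ):ℚ) = (a:ℚ) := by
    rw [hXdef, sub_mul, Finset.sum_mul, Finset.sum_congr rfl hterm, hadef]
    push_cast
    ring
  have hnd : ¬ p ∣ 2*M := by
    intro h
    rcases (Nat.Prime.dvd_mul hp).mp h with h | h
    · have := Nat.le_of_dvd (by omega) h
      omega
    · have := (Nat.Prime.dvd_factorial hp).mp h
      omega
  have hdvd : (p:ℤ) ∣ a := by
    rw [← ZMod.intCast_zmod_eq_zero_iff_dvd]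
    have hS : ∀ k ∈ (Finset.Icc 1 ((p - 1) / 2)).filter (fun k => Odd k),
        ((c k : ℕ) : ZMod p) = 2 * (M : ZMod p) * ((k : ZMod p))⁻¹ := by
      intro k hk
      rw [mem_filter, mem_Icc] at hk
      have hdvd' : k ∣ M := Nat.dvd_factorial (by omega) hk.1.2
      have hk0 : (k : ZMod p) ≠ 0 := by
        rw [Ne, ZMod.natCast_eq_zero_iff]
        intro hc
        have := Nat.le_of_dvd (by omega) hc
        omega
      have hxk : (k : ZMod p) * ((M/k : ℕ) : ZMod p) = (M : ZMod p) := by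
        rw [← Nat.cast_mul]
        congr 1
        exact Nat.mul_div_cancel' hdvd'
      have h2 : ((M/k : ℕ) : ZMod p) = (k : ZMod p)⁻¹ * (M : ZMod p) := by
        rw [← hxk, inv_mul_cancel_left₀ hk0]
      simp only [hcdef]
      push_cast
      rw [h2]
      ring
    rw [hadef]
    push_cast
    rw [Finset.sum_congr rfl hS, ← Finset.mul_sum]
    have hcore := core_congruence p hp hodd
    linear_combination (M : ZMod p) * hcore
  have ha0 : a ≠ 0 := by
    intro h0
    apply hx
    have hz : X * ((2*M:ℕ):ℚ) = 0 := by rw [hxa, h0]; norm_num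
    rcases mul_eq_zero.mp hz with h | h
    · exact h
    · exact absurd h hDQ
  have hXeq : X = (a:ℚ) / ((2*M:ℕ):ℚ) := by
    rw [eq_div_iff hDQ]
    exact hxa
  have ha0' : ((a:ℤ):ℚ) ≠ 0 := Int.cast_ne_zero.mpr ha0
  rw [hXeq, padicValRat.div ha0' hDQ, padicValRat.of_int, padicValRat.of_nat]
  have h1 : 1 ≤ padicValInt p a := by
    have := (padicValInt_dvd_iff 1 a).mp (by simpa using hdvd)
    rcases this with h | h
    · exact absurd h ha0
    · exact h
  have h2 : padicValNat p (2*M) = 0 := padicValNat.eq_zero_of_not_dvd hnd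
  rw [h2]
  push_cast
  omega
end

section
/- Let p be an odd prime. Then Σ_{k=1}^{p-2} B_k/(k·2^k) ≡ q_p(2) + w_p (mod p), i.e. the powers-of-two weighted sum of the first p−2 divided Bernoulli numbers is congruent modulo p to the Fermat quotient of 2 plus the Wilson quotient. -/
open Finset

section Aux
variable (p : ℕ) [hpf : Fact p.Prime]

lemma aux_sum_split {M : Type*} [AddCommMonoid M] (h3 : 3 ≤ p) (f : ℕ → M) :
    ∑ i ∈ range p, f i = f 0 + f 1 + (∑ i ∈ Icc 2 (p-2), f i) + f (p-1) := by
  have h1 : p = (p-1) + 1 := by omega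
  have h2 : Finset.Ico 2 (p-1) = Finset.Icc 2 (p-2) := by
    rw [show p - 1 = (p-2) + 1 by omega, Finset.Ico_add_one_right_eq_Icc]
  conv_lhs => rw [h1, Finset.sum_range_succ, Finset.range_eq_Ico,
    Finset.sum_eq_sum_Ico_succ_bot (by omega : 0 < p - 1),
    Finset.sum_eq_sum_Ico_succ_bot (by omega : 1 < p - 1)]
  rw [h2]
  abel

lemma aux_norm_nat (n : ℕ) : ‖(n : ℚ_[p])‖ ≤ 1 := by
  have := Padic.norm_int_le_one (p := p) (n : ℤ)
  push_cast at this
  exact this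

lemma aux_norm_int_dvd_pow (n : ℕ) {a : ℤ} (h : (p:ℤ)^n ∣ a) :
    ‖(a : ℚ_[p])‖ ≤ ((p:ℝ)⁻¹)^n := by
  have := (Padic.norm_int_le_pow_iff_dvd (p := p) a n).mpr h
  rwa [zpow_neg, zpow_natCast, ← inv_pow] at this

lemma aux_norm_int_dvd {a : ℤ} (h : (p:ℤ) ∣ a) : ‖(a : ℚ_[p])‖ ≤ (p:ℝ)⁻¹ := by
  have := aux_norm_int_dvd_pow p 1 (by simpa using h)
  simpa using this

lemma aux_norm_nat_unit {n : ℕ} (h : ¬ p ∣ n) : ‖(n : ℚ_[p])‖ = 1 := by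
  have h1 : ¬ ((p:ℤ) ∣ (n:ℤ)) := by exact_mod_cast h
  have h2 := (Padic.norm_intCast_lt_one_iff (p := p) (k := (n:ℤ))).not.mpr h1
  have h3 : ‖((n:ℤ) : ℚ_[p])‖ ≤ 1 := Padic.norm_int_le_one _
  push_cast at h2 h3
  push_cast
  linarith [not_lt.mp h2]

lemma aux_two_unit (hodd : Odd p) : ‖(2 : ℚ_[p])‖ = 1 := by
  have h2 : ¬ p ∣ 2 := by
    intro h
    have := Nat.le_of_dvd (by norm_num) h
    have h4 := hpf.out.two_le
    have h5 := Nat.odd_iff.mp hodd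
    omega
  have := aux_norm_nat_unit p h2
  push_cast at this
  exact this

lemma aux_choose (k : ℕ) (hk : k < p) : (p:ℤ) ∣ ((p-1).choose k : ℤ) - (-1)^k := by
  induction k with
  | zero => simp
  | succ k ih =>
    obtain ⟨a, ha⟩ := ih (by omega)
    obtain ⟨b, hb⟩ := Int.natCast_dvd_natCast.mpr
      (Nat.Prime.dvd_choose_self hpf.out (by omega) hk)
    have h2 : ((p-1).choose k : ℤ) + (p-1).choose (k+1) = p.choose (k+1) := by
      have hp1 : p = (p - 1) + 1 := by omega
      rw [hp1, Nat.choose_succ_succ]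
      push_cast
      ring
    refine ⟨b - a, ?_⟩
    have : ((p-1).choose (k+1) : ℤ) = (p.choose (k+1) : ℤ) - (p-1).choose k := by
      linarith [h2]
    rw [this, hb, pow_succ]
    linear_combination -ha

lemma aux_sum_pow (i : ℕ) (h1 : 1 ≤ i) (h2 : i < p - 1) :
    (p:ℤ) ∣ ∑ k ∈ range p, (k:ℤ)^i := by
  rw [← ZMod.intCast_zmod_eq_zero_iff_dvd]
  push_cast
  have hbij : ∑ k ∈ range p, ((k : ZMod p))^i = ∑ x : ZMod p, x^i := by
    refine Finset.sum_nbij' (i := fun k => (k : ZMod p)) (j := fun x => x.val) ?_ ?_ ?_ ?_ ?_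
    · intro a _; exact Finset.mem_univ _
    · intro x _
      exact Finset.mem_range.mpr (ZMod.val_lt x)
    · intro a ha
      exact ZMod.val_cast_of_lt (Finset.mem_range.mp ha)
    · intro x _
      exact ZMod.natCast_rightInverse x
    · intro a _; rfl
  rw [hbij]
  have hcard : Fintype.card (ZMod p) = p := ZMod.card p
  exact FiniteField.sum_pow_lt_card_sub_one (K := ZMod p) i (by rw [hcard]; omega)



lemma aux_norm_add {C : ℝ} (a b : ℚ_[p]) (ha : ‖a‖ ≤ C) (hb : ‖b‖ ≤ C) : ‖a + b‖ ≤ C :=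
  le_trans (Padic.nonarchimedean a b) (max_le ha hb)

lemma aux_norm_sub {C : ℝ} (a b : ℚ_[p]) (ha : ‖a‖ ≤ C) (hb : ‖b‖ ≤ C) : ‖a - b‖ ≤ C := by
  rw [sub_eq_add_neg]
  exact aux_norm_add p a (-b) ha (by rwa [norm_neg])

lemma aux_norm_mul3 {a b c : ℚ_[p]} {A B C : ℝ} (hA : 0 ≤ A) (hB : 0 ≤ B)
    (ha : ‖a‖ ≤ A) (hb : ‖b‖ ≤ B) (hc : ‖c‖ ≤ C) : ‖a * b * c‖ ≤ A * B * C := by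
  rw [norm_mul, norm_mul]
  exact mul_le_mul (mul_le_mul ha hb (norm_nonneg b) hA) hc (norm_nonneg c) (by positivity)

lemma aux_two_unit' (h3 : 3 ≤ p) : ‖(2 : ℚ_[p])‖ = 1 := by
  have h2 : ¬ p ∣ 2 := fun h => by have := Nat.le_of_dvd (by norm_num) h; omega
  have := aux_norm_nat_unit p h2
  push_cast at this
  exact this

lemma aux_faulhaber (n e : ℕ) :
    ((e:ℚ)+1) * ∑ k ∈ range n, (k:ℚ)^e
      = (∑ j ∈ range e, bernoulli j * ((e+1).choose j) * (n:ℚ)^(e+1-j))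
        + bernoulli e * ((e:ℚ)+1) * n := by
  have h0 : ((e:ℚ)+1) ≠ 0 := by positivity
  have hid : ((e:ℚ)+1) * ∑ k ∈ range n, (k:ℚ)^e
      = ∑ j ∈ range (e+1), bernoulli j * ((e+1).choose j) * (n:ℚ)^(e+1-j) := by
    rw [sum_range_pow, Finset.mul_sum]
    refine Finset.sum_congr rfl fun j hj => ?_
    rw [mul_comm, div_mul_cancel₀ _ h0]
  rw [hid, Finset.sum_range_succ, Nat.choose_succ_self_right]
  have h1 : e + 1 - e = 1 := by omega
  rw [h1]
  push_cast
  ring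

lemma aux_bern : ∀ i, 1 ≤ i → i ≤ p - 2 → ‖((bernoulli i : ℚ) : ℚ_[p])‖ ≤ 1 := by
  intro i
  induction i using Nat.strong_induction_on with
  | _ i ih =>
  intro h1 h2
  have hple := hpf.out.two_le
  have h3 : 3 ≤ p := by omega
  have hone : ‖((bernoulli 1 : ℚ) : ℚ_[p])‖ ≤ 1 := by
    rw [bernoulli_one]
    have : (((-1/2 : ℚ)) : ℚ_[p]) = -(2:ℚ_[p])⁻¹ := by push_cast; ring
    rw [this, norm_neg, norm_inv, aux_two_unit' p h3, inv_one]
  rcases eq_or_lt_of_le h1 with h|hi2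
  · rw [← h]; exact hone
  -- 2 ≤ i
  have hBle : ∀ j, j < i → ‖((bernoulli j : ℚ) : ℚ_[p])‖ ≤ 1 := by
    intro j hj
    match j with
    | 0 => simp [bernoulli_zero]
    | 1 => exact hone
    | (m+2) => exact ih _ hj (by omega) (by omega)
  have hid := aux_faulhaber p i
  have hK := congrArg (fun q : ℚ => (q : ℚ_[p])) hid
  push_cast at hK
  -- hK : (↑i+1) * ∑ k ∈ range p, (↑k)^i = ∑ j ∈ range i, ↑(bernoulli j) * ↑((i+1).choose j) * ↑p^(i+1-j) + ↑(bernoulli i) * (↑i+1) * ↑p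
  have hppos : (0:ℝ) < (p:ℝ)⁻¹ := by
    have : (0:ℝ) < p := by exact_mod_cast (by omega : 0 < p)
    positivity
  have hS : ‖∑ k ∈ range p, ((k:ℚ_[p]))^i‖ ≤ (p:ℝ)⁻¹ := by
    have hdvd := aux_sum_pow p i h1 (by omega)
    have hc : ((∑ k ∈ range p, (k:ℤ)^i : ℤ) : ℚ_[p]) = ∑ k ∈ range p, ((k:ℚ_[p]))^i := by
      push_cast; rfl
    rw [← hc]
    exact aux_norm_int_dvd p hdvd
  have hT : ‖∑ j ∈ range i, ((bernoulli j : ℚ) : ℚ_[p]) * ((i+1).choose j : ℚ_[p]) * (p:ℚ_[p])^(i+1-j)‖ ≤ (p:ℝ)⁻¹ := by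
    apply IsUltrametricDist.norm_sum_le_of_forall_le_of_nonneg (le_of_lt hppos)
    intro j hj
    have hj' := Finset.mem_range.mp hj
    have : ‖(p:ℚ_[p])^(i+1-j)‖ ≤ (p:ℝ)⁻¹ := by
      rw [norm_pow, Padic.norm_p]
      calc ((p:ℝ)⁻¹)^(i+1-j) ≤ ((p:ℝ)⁻¹)^1 := by
            apply pow_le_pow_of_le_one (le_of_lt hppos) _ (by omega)
            rw [inv_le_one_iff₀]; right; exact_mod_cast (by omega : 1 ≤ p)
        _ = (p:ℝ)⁻¹ := pow_one _
    calc ‖((bernoulli j : ℚ) : ℚ_[p]) * ((i+1).choose j : ℚ_[p]) * (p:ℚ_[p])^(i+1-j)‖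
        ≤ 1 * 1 * (p:ℝ)⁻¹ :=
          aux_norm_mul3 p zero_le_one zero_le_one (hBle j hj') (aux_norm_nat p _) this
      _ = (p:ℝ)⁻¹ := by ring
  have hiso : ((bernoulli i : ℚ) : ℚ_[p]) * ((i:ℚ_[p])+1) * (p:ℚ_[p])
      = ((i:ℚ_[p])+1) * (∑ k ∈ range p, ((k:ℚ_[p]))^i)
        - ∑ j ∈ range i, ((bernoulli j : ℚ) : ℚ_[p]) * ((i+1).choose j : ℚ_[p]) * (p:ℚ_[p])^(i+1-j) := by
    linear_combination -hK
  have hfin : ‖((bernoulli i : ℚ) : ℚ_[p]) * ((i:ℚ_[p])+1) * (p:ℚ_[p])‖ ≤ (p:ℝ)⁻¹ := by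
    rw [hiso]
    apply aux_norm_sub
    · calc ‖((i:ℚ_[p])+1) * (∑ k ∈ range p, ((k:ℚ_[p]))^i)‖
          ≤ 1 * (p:ℝ)⁻¹ := by
            rw [norm_mul]
            apply mul_le_mul _ hS (norm_nonneg _) zero_le_one
            have : ((i:ℚ_[p])+1) = ((i+1:ℕ) : ℚ_[p]) := by push_cast; ring
            rw [this]; exact aux_norm_nat p _
        _ = (p:ℝ)⁻¹ := one_mul _
    · exact hT
  have hiu : ‖((i:ℚ_[p])+1)‖ = 1 := by
    have : ((i:ℚ_[p])+1) = ((i+1:ℕ) : ℚ_[p]) := by push_cast; ring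
    rw [this]
    apply aux_norm_nat_unit
    intro hdvd
    have := Nat.le_of_dvd (by omega) hdvd
    omega
  rw [norm_mul, norm_mul, hiu, Padic.norm_p, mul_one] at hfin
  exact le_of_mul_le_mul_right (by linarith) hppos



lemma aux_prod_one_add {ι : Type*} (s : Finset ι) (f : ι → ZMod (p^2)) :
    ∏ i ∈ s, (1 + (p : ZMod (p^2)) * f i) = 1 + (p : ZMod (p^2)) * ∑ i ∈ s, f i := by
  classical
  have hp2 : (p : ZMod (p^2)) * (p : ZMod (p^2)) = 0 := by
    have h := ZMod.natCast_self (p^2)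
    push_cast at h
    linear_combination h
  induction s using Finset.cons_induction with
  | empty => simp
  | cons a s ha ih =>
    rw [Finset.prod_cons, ih, Finset.sum_cons]
    linear_combination (f a * ∑ i ∈ s, f i) * hp2

lemma aux_sq_zero_pow {R : Type*} [CommRing R] {t : R} (ht : t * t = 0) (n : ℕ) :
    (t - 1)^n = (-1)^n * (1 - n * t) := by
  induction n with
  | zero => simp
  | succ n ih =>
    rw [pow_succ, ih]
    push_cast
    linear_combination ((-1:R)^n * (-(n:R))) * ht

lemma aux_lerch (h3 : 3 ≤ p) :
    (p:ℤ)^2 ∣ (∑ x ∈ Icc 1 (p-1), (x:ℤ)^(p-1)) - ((p:ℤ) - 1)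
      - ((Nat.factorial (p-1) : ℤ) + 1) := by
  have hdvd : ∀ x ∈ Icc 1 (p-1), (p:ℤ) ∣ (x:ℤ)^(p-1) - 1 := by
    intro x hx
    rw [Finset.mem_Icc] at hx
    have hx0 : ((x:ℕ) : ZMod p) ≠ 0 := by
      rw [Ne, ZMod.natCast_eq_zero_iff]
      intro hd
      have := Nat.le_of_dvd (by omega) hd; omega
    have hf := ZMod.pow_card_sub_one_eq_one hx0
    rw [← ZMod.intCast_zmod_eq_zero_iff_dvd]
    push_cast
    rw [hf]
    ring
  set g : ℕ → ℤ := fun x => ((x:ℤ)^(p-1) - 1)/p with hgdef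
  have hg : ∀ x ∈ Icc 1 (p-1), (x:ℤ)^(p-1) = 1 + (p:ℤ) * g x := by
    intro x hx
    have := Int.mul_ediv_cancel' (hdvd x hx)
    simp only [hgdef]
    omega
  set G : ℤ := ∑ x ∈ Icc 1 (p-1), g x with hGdef
  have hsum : (∑ x ∈ Icc 1 (p-1), (x:ℤ)^(p-1)) = ((p:ℤ) - 1) + (p:ℤ) * G := by
    rw [Finset.sum_congr rfl hg, Finset.sum_add_distrib, Finset.sum_const, ← Finset.mul_sum]
    rw [Nat.card_Icc]
    simp only [nsmul_eq_mul, mul_one]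
    have h1 : ((p - 1 + 1 - 1 : ℕ) : ℤ) = (p:ℤ) - 1 := by omega
    rw [h1]
  have hw : (p:ℤ) ∣ (Nat.factorial (p-1) : ℤ) + 1 := by
    rw [← ZMod.intCast_zmod_eq_zero_iff_dvd]
    push_cast
    rw [ZMod.wilsons_lemma]
    ring
  obtain ⟨w, hwz⟩ := hw
  -- work in ZMod (p^2)
  have hprod1 : (∏ x ∈ Icc 1 (p-1), ((x:ℕ) : ZMod (p^2))^(p-1))
      = ((Nat.factorial (p-1) : ℕ) : ZMod (p^2))^(p-1) := by
    have hIcc : ∏ x ∈ Icc 1 (p-1), x = Nat.factorial (p-1) := by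
      rw [← Finset.prod_range_add_one_eq_factorial]
      rw [show Icc 1 (p-1) = Ico 1 p by
        rw [← Finset.Ico_add_one_right_eq_Icc, show p - 1 + 1 = p by omega]]
      rw [Finset.prod_Ico_eq_prod_range]
      exact Finset.prod_congr rfl (fun x _ => by omega)
    rw [Finset.prod_pow, ← Nat.cast_prod, hIcc]
  have hprod2 : (∏ x ∈ Icc 1 (p-1), ((x:ℕ) : ZMod (p^2))^(p-1))
      = 1 + (p : ZMod (p^2)) * ((G : ℤ) : ZMod (p^2)) := by
    have hcongr : ∀ x ∈ Icc 1 (p-1),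
        ((x:ℕ) : ZMod (p^2))^(p-1) = 1 + (p : ZMod (p^2)) * ((g x : ℤ) : ZMod (p^2)) := by
      intro x hx
      have hZ := hg x hx
      have := congrArg (fun z : ℤ => ((z : ZMod (p^2)))) hZ
      push_cast at this
      push_cast
      exact this
    rw [Finset.prod_congr rfl hcongr, aux_prod_one_add, hGdef]
    push_cast
    ring_nf
  have hp2 : (p : ZMod (p^2)) * (p : ZMod (p^2)) = 0 := by
    have h := ZMod.natCast_self (p^2)
    push_cast at h
    linear_combination h
  have hfact : ((Nat.factorial (p-1) : ℕ) : ZMod (p^2))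
      = ((p : ZMod (p^2)) * ((w : ℤ) : ZMod (p^2))) - 1 := by
    have : (Nat.factorial (p-1) : ℤ) = (p:ℤ) * w - 1 := by omega
    have hc := congrArg (fun z : ℤ => ((z : ZMod (p^2)))) this
    push_cast at hc
    push_cast
    exact hc
  have hEven : Even (p - 1) := by
    have hoddp : Odd p := hpf.out.odd_of_ne_two (by omega)
    exact Nat.Odd.sub_odd hoddp odd_one
  have htsq : ((p : ZMod (p^2)) * ((w : ℤ) : ZMod (p^2))) * ((p : ZMod (p^2)) * ((w : ℤ) : ZMod (p^2))) = 0 := by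
    linear_combination (((w : ℤ) : ZMod (p^2)) * ((w : ℤ) : ZMod (p^2))) * hp2
  have hpow := aux_sq_zero_pow htsq (p - 1)
  rw [hEven.neg_one_pow, one_mul] at hpow
  have heq : 1 + (p : ZMod (p^2)) * ((G : ℤ) : ZMod (p^2))
      = 1 - ((p - 1 : ℕ) : ZMod (p^2)) * ((p : ZMod (p^2)) * ((w : ℤ) : ZMod (p^2))) := by
    rw [← hprod2, hprod1, hfact, hpow]
  have h1p : ((p - 1 : ℕ) : ZMod (p^2)) = (p : ZMod (p^2)) - 1 := by
    have : ((p - 1 : ℕ) : ℤ) = (p : ℤ) - 1 := by omega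
    have hcast := congrArg (fun z : ℤ => ((z : ZMod (p^2)))) this
    push_cast at hcast
    exact hcast
  have hc0 : (((p:ℤ) * (G + ((p:ℤ) - 1) * w) : ℤ) : ZMod (p^2)) = 0 := by
    push_cast
    rw [h1p] at heq
    linear_combination heq
  rw [ZMod.intCast_zmod_eq_zero_iff_dvd] at hc0
  have hc1 : (p:ℤ) * (p:ℤ) ∣ (p:ℤ) * (G + ((p:ℤ) - 1) * w) := by
    have : ((p^2 : ℕ) : ℤ) = (p:ℤ) * (p:ℤ) := by push_cast; ring
    rwa [this] at hc0
  have hpne : (p:ℤ) ≠ 0 := by exact_mod_cast (by omega : p ≠ 0)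
  obtain ⟨c, hc2⟩ := (mul_dvd_mul_iff_left hpne).mp hc1
  refine ⟨c - w, ?_⟩
  linear_combination hsum - hwz + (p:ℤ) * hc2



lemma aux_L2 (h3 : 3 ≤ p) :
    ‖(p:ℚ_[p]) * ((bernoulli (p-1) : ℚ) : ℚ_[p]) - ((p:ℚ_[p]) - 1)
      - ((Nat.factorial (p-1) : ℚ_[p]) + 1)‖ ≤ ((p:ℝ)⁻¹)^2 := by
  have hppos : (0:ℝ) < (p:ℝ)⁻¹ := by
    have : (0:ℝ) < p := by exact_mod_cast (by omega : 0 < p)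
    positivity
  have hple1 : (p:ℝ)⁻¹ ≤ 1 := by
    rw [inv_le_one_iff₀]; right; exact_mod_cast (by omega : 1 ≤ p)
  have hid := aux_faulhaber p (p-1)
  have hpp : p - 1 + 1 = p := by omega
  rw [hpp] at hid
  have hc : ((p-1 : ℕ):ℚ) + 1 = (p:ℚ) := by
    rw [Nat.cast_sub (by omega : 1 ≤ p)]
    ring
  rw [hc] at hid
  have hK := congrArg (fun q : ℚ => (q : ℚ_[p])) hid
  push_cast at hK
  -- hK : (p:K) * ∑ k ∈ range p, (k:K)^(p-1) = ∑ j ∈ range (p-1), ↑(bernoulli j) * ↑(p.choose j) * (p:K)^(p-j) + ↑(bernoulli (p-1)) * (p:K) * (p:K)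
  set L : ℤ := (∑ x ∈ Icc 1 (p-1), (x:ℤ)^(p-1)) - ((p:ℤ) - 1) - ((Nat.factorial (p-1) : ℤ) + 1) with hLdef
  have hSK : ((∑ x ∈ Icc 1 (p-1), (x:ℤ)^(p-1) : ℤ) : ℚ_[p]) = ∑ k ∈ range p, (k:ℚ_[p])^(p-1) := by
    push_cast
    rw [Finset.range_eq_Ico, Finset.sum_eq_sum_Ico_succ_bot (by omega : 0 < p)]
    rw [show Finset.Ico (0+1) p = Icc 1 (p-1) by
      rw [← Finset.Ico_add_one_right_eq_Icc, show p - 1 + 1 = p by omega]]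
    simp [zero_pow (show p - 1 ≠ 0 by omega)]
  have heq : (p:ℚ_[p]) * ((p:ℚ_[p]) * ((bernoulli (p-1) : ℚ) : ℚ_[p]) - ((p:ℚ_[p]) - 1)
        - ((Nat.factorial (p-1) : ℚ_[p]) + 1))
      = ((((p:ℤ) * L : ℤ)) : ℚ_[p])
        - ∑ j ∈ range (p-1), ((bernoulli j : ℚ) : ℚ_[p]) * (p.choose j : ℚ_[p]) * (p:ℚ_[p])^(p-j) := by
    rw [hLdef]
    push_cast
    rw [← hSK] at hK
    push_cast at hK
    linear_combination -hK
  have hA : ‖((((p:ℤ) * L : ℤ)) : ℚ_[p])‖ ≤ ((p:ℝ)⁻¹)^3 := by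
    apply aux_norm_int_dvd_pow p 3
    have h2 := aux_lerch p h3
    rw [← hLdef] at h2
    obtain ⟨m, hm⟩ := h2
    exact ⟨m, by rw [hm]; ring⟩
  have hT : ‖∑ j ∈ range (p-1), ((bernoulli j : ℚ) : ℚ_[p]) * (p.choose j : ℚ_[p]) * (p:ℚ_[p])^(p-j)‖
      ≤ ((p:ℝ)⁻¹)^3 := by
    apply IsUltrametricDist.norm_sum_le_of_forall_le_of_nonneg (by positivity)
    intro j hj
    have hj' := Finset.mem_range.mp hj
    rcases Nat.eq_zero_or_pos j with hj0 | hj1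
    · subst hj0
      have : ‖(p:ℚ_[p])^(p-0)‖ ≤ ((p:ℝ)⁻¹)^3 := by
        rw [norm_pow, Padic.norm_p]
        exact pow_le_pow_of_le_one (le_of_lt hppos) hple1 (by omega)
      calc ‖((bernoulli 0 : ℚ) : ℚ_[p]) * (p.choose 0 : ℚ_[p]) * (p:ℚ_[p])^(p-0)‖
          ≤ 1 * 1 * ((p:ℝ)⁻¹)^3 := by
            apply aux_norm_mul3 p zero_le_one zero_le_one _ _ this
            · simp [bernoulli_zero]
            · simp
        _ = ((p:ℝ)⁻¹)^3 := by ring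
    · have hB : ‖((bernoulli j : ℚ) : ℚ_[p])‖ ≤ 1 := aux_bern p j hj1 (by omega)
      have hC : ‖(p.choose j : ℚ_[p])‖ ≤ (p:ℝ)⁻¹ := by
        have hdvd : (p:ℤ) ∣ (p.choose j : ℤ) :=
          Int.natCast_dvd_natCast.mpr (Nat.Prime.dvd_choose_self hpf.out (by omega) (by omega))
        have := aux_norm_int_dvd p hdvd
        push_cast at this
        exact this
      have hP : ‖(p:ℚ_[p])^(p-j)‖ ≤ ((p:ℝ)⁻¹)^2 := by
        rw [norm_pow, Padic.norm_p]
        exact pow_le_pow_of_le_one (le_of_lt hppos) hple1 (by omega)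
      calc ‖((bernoulli j : ℚ) : ℚ_[p]) * (p.choose j : ℚ_[p]) * (p:ℚ_[p])^(p-j)‖
          ≤ 1 * (p:ℝ)⁻¹ * ((p:ℝ)⁻¹)^2 :=
            aux_norm_mul3 p zero_le_one (le_of_lt hppos) hB hC hP
        _ = ((p:ℝ)⁻¹)^3 := by ring
  have hfin : ‖(p:ℚ_[p]) * ((p:ℚ_[p]) * ((bernoulli (p-1) : ℚ) : ℚ_[p]) - ((p:ℚ_[p]) - 1)
      - ((Nat.factorial (p-1) : ℚ_[p]) + 1))‖ ≤ ((p:ℝ)⁻¹)^3 := by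
    rw [heq]
    exact aux_norm_sub p _ _ hA hT
  rw [norm_mul, Padic.norm_p] at hfin
  have : ((p:ℝ)⁻¹)^3 = (p:ℝ)⁻¹ * ((p:ℝ)⁻¹)^2 := by ring
  rw [this] at hfin
  exact le_of_mul_le_mul_left hfin hppos



lemma aux_sum_split' {M : Type*} [AddCommMonoid M] (h3 : 3 ≤ p) (f : ℕ → M) :
    ∑ i ∈ range (p-1), f i = f 0 + f 1 + ∑ i ∈ Icc 2 (p-2), f i := by
  have h2 : Finset.Ico 2 (p-1) = Finset.Icc 2 (p-2) := by
    rw [show p - 1 = (p-2) + 1 by omega, Finset.Ico_add_one_right_eq_Icc]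
  rw [Finset.range_eq_Ico, Finset.sum_eq_sum_Ico_succ_bot (by omega : 0 < p - 1),
    Finset.sum_eq_sum_Ico_succ_bot (by omega : 1 < p - 1), h2, add_assoc]

lemma aux_fermat (h3 : 3 ≤ p) : (p:ℤ) ∣ 2^(p-1) - 1 := by
  have h2 : ((2:ℕ) : ZMod p) ≠ 0 := by
    rw [Ne, ZMod.natCast_eq_zero_iff]
    intro hd; have := Nat.le_of_dvd (by norm_num) hd; omega
  have hf := ZMod.pow_card_sub_one_eq_one h2
  rw [← ZMod.intCast_zmod_eq_zero_iff_dvd]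
  push_cast
  push_cast at hf
  rw [hf]
  ring

lemma aux_conv (x : ℚ) (h : ‖((x : ℚ) : ℚ_[p])‖ ≤ (p:ℝ)⁻¹) : PadicDvd p 1 x := by
  by_cases hx : x = 0
  · exact Or.inl hx
  right
  rw [Padic.eq_padicNorm, padicNorm.eq_zpow_of_nonzero hx] at h
  push_cast at h
  have hp1 : (1:ℝ) < p := by exact_mod_cast hpf.out.one_lt
  rw [show (p:ℝ)⁻¹ = (p:ℝ)^(-1 : ℤ) by rw [zpow_neg_one]] at h
  have h2 := (zpow_le_zpow_iff_right₀ hp1).mp h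
  push_cast
  omega

lemma aux_main (h3 : 3 ≤ p) :
    ‖((((∑ k ∈ Icc 1 (p - 2), bernoulli k / ((k : ℚ) * 2 ^ k)) -
      (((2 : ℚ) ^ (p - 1) - 1) / p + (Nat.factorial (p - 1) + 1 : ℚ) / p)) : ℚ) : ℚ_[p])‖
      ≤ (p:ℝ)⁻¹ := by
  have hppos : (0:ℝ) < (p:ℝ)⁻¹ := by
    have : (0:ℝ) < p := by exact_mod_cast (by omega : 0 < p)
    positivity
  have hpK0 : (p:ℚ_[p]) ≠ 0 := Nat.cast_ne_zero.mpr (by omega)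
  have hp0Q : (p:ℚ) ≠ 0 := Nat.cast_ne_zero.mpr (by omega)
  -- abbreviations
  set QK : ℚ_[p] := ((((2 : ℚ) ^ (p - 1) - 1) / p : ℚ) : ℚ_[p]) with hQKdef
  set WK : ℚ_[p] := (((Nat.factorial (p - 1) + 1 : ℚ) / p : ℚ) : ℚ_[p]) with hWKdef
  set SK : ℚ_[p] := ∑ k ∈ Icc 1 (p-2), ((bernoulli k : ℚ) : ℚ_[p]) / ((k:ℚ_[p]) * 2^k) with hSKdef
  have hxcast : ((((∑ k ∈ Icc 1 (p - 2), bernoulli k / ((k : ℚ) * 2 ^ k)) -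
      (((2 : ℚ) ^ (p - 1) - 1) / p + (Nat.factorial (p - 1) + 1 : ℚ) / p)) : ℚ) : ℚ_[p])
      = SK - QK - WK := by
    rw [hQKdef, hWKdef, hSKdef]
    push_cast
    ring
  rw [hxcast]
  -- basic identities
  have h2p1 : (2:ℚ_[p])^(p-1) = 1 + (p:ℚ_[p]) * QK := by
    rw [hQKdef]
    push_cast
    field_simp
    ring
  have hW : (p:ℚ_[p]) * WK = ((Nat.factorial (p-1) : ℚ_[p]) + 1) := by
    rw [hWKdef]
    push_cast
    field_simp
  have hQn : ‖QK‖ ≤ 1 := by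
    obtain ⟨z, hz⟩ := aux_fermat p h3
    have hzQ : (((2 : ℚ) ^ (p - 1) - 1) / p : ℚ) = (z:ℚ) := by
      have : ((2:ℚ))^(p-1) - 1 = (p:ℚ) * z := by exact_mod_cast congrArg (fun t : ℤ => (t:ℚ)) hz
      rw [this]
      field_simp
    rw [hQKdef, hzQ]
    push_cast
    exact Padic.norm_int_le_one z
  -- Faulhaber identity at n = 2, exponent p - 1
  have hid := aux_faulhaber 2 (p-1)
  have hpp : p - 1 + 1 = p := by omega
  rw [hpp] at hid
  have hcc : ((p-1 : ℕ):ℚ) + 1 = (p:ℚ) := by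
    rw [Nat.cast_sub (by omega : 1 ≤ p)]; ring
  rw [hcc] at hid
  have hsum2 : ∑ k ∈ range 2, (k:ℚ)^(p-1) = 1 := by
    rw [Finset.sum_range_succ, Finset.sum_range_one]
    norm_num [zero_pow (show p - 1 ≠ 0 by omega)]
  rw [hsum2, mul_one] at hid
  have hm := congrArg (fun q : ℚ => (q : ℚ_[p])) hid
  push_cast at hm
  rw [aux_sum_split' p h3
    (fun j => ((bernoulli j : ℚ) : ℚ_[p]) * (p.choose j : ℚ_[p]) * (2:ℚ_[p])^(p-j))] at hm
  have hB0 : ((bernoulli 0 : ℚ) : ℚ_[p]) = 1 := by rw [bernoulli_zero]; push_cast; ring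
  have hB1 : ((bernoulli 1 : ℚ) : ℚ_[p]) = -(2:ℚ_[p])⁻¹ := by
    rw [bernoulli_one]; push_cast; ring
  have hch0 : ((p.choose 0 : ℕ) : ℚ_[p]) = 1 := by simp
  have hch1 : ((p.choose 1 : ℕ) : ℚ_[p]) = (p:ℚ_[p]) := by simp
  have hpow0 : (2:ℚ_[p])^(p-0) = (2:ℚ_[p])^(p-1) * 2 := by
    rw [Nat.sub_zero, ← pow_succ, Nat.sub_add_cancel (by omega : 1 ≤ p)]
  rw [hB0, hch0, hch1, hB1] at hm
  -- decompose the middle sum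
  have hmid : ∑ i ∈ Icc 2 (p-2), ((bernoulli i : ℚ) : ℚ_[p]) * (p.choose i : ℚ_[p]) * (2:ℚ_[p])^(p-i)
      = (-2) * (p:ℚ_[p]) * (∑ i ∈ Icc 2 (p-2), ((bernoulli i : ℚ) : ℚ_[p]) / ((i:ℚ_[p]) * 2^i))
        + ∑ i ∈ Icc 2 (p-2), (((bernoulli i : ℚ) : ℚ_[p]) * (p.choose i : ℚ_[p]) * (2:ℚ_[p])^(p-i)
            - (-2) * (p:ℚ_[p]) * (((bernoulli i : ℚ) : ℚ_[p]) / ((i:ℚ_[p]) * 2^i))) := by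
    rw [Finset.mul_sum, ← Finset.sum_add_distrib]
    exact Finset.sum_congr rfl (fun i _ => by ring)
  rw [hmid] at hm
  have hpeel : SK = ((bernoulli 1 : ℚ) : ℚ_[p]) / ((1:ℚ_[p]) * 2^1)
      + ∑ i ∈ Icc 2 (p-2), ((bernoulli i : ℚ) : ℚ_[p]) / ((i:ℚ_[p]) * 2^i) := by
    rw [hSKdef, show Icc 1 (p-2) = Ico 1 (p-1) by
        rw [← Finset.Ico_add_one_right_eq_Icc, show p - 2 + 1 = p - 1 by omega],
      Finset.sum_eq_sum_Ico_succ_bot (by omega : 1 < p - 1),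
      show Ico (1+1) (p-1) = Icc 2 (p-2) by
        rw [show p - 1 = (p-2)+1 by omega, Finset.Ico_add_one_right_eq_Icc]]
    norm_num
  rw [hB1] at hpeel
  have key : (2:ℚ_[p]) * (p:ℚ_[p]) * (SK - QK - WK)
      = -((p:ℚ_[p])^2 * QK)/2
        + (∑ i ∈ Icc 2 (p-2), (((bernoulli i : ℚ) : ℚ_[p]) * (p.choose i : ℚ_[p]) * (2:ℚ_[p])^(p-i)
            - (-2) * (p:ℚ_[p]) * (((bernoulli i : ℚ) : ℚ_[p]) / ((i:ℚ_[p]) * 2^i))))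
        + 2 * ((p:ℚ_[p]) * ((bernoulli (p-1) : ℚ) : ℚ_[p]) - ((p:ℚ_[p]) - 1)
            - ((Nat.factorial (p-1) : ℚ_[p]) + 1)) := by
    linear_combination hm + hpow0 + (2*(p:ℚ_[p]))*hpeel - 2*hW + (2 - (p:ℚ_[p])/2)*h2p1
  -- norm bounds
  have h2u : ‖(2:ℚ_[p])‖ = 1 := aux_two_unit' p h3
  have hQbound : ‖-((p:ℚ_[p])^2 * QK)/2‖ ≤ ((p:ℝ)⁻¹)^2 := by
    rw [norm_div, norm_neg, norm_mul, norm_pow, Padic.norm_p, h2u, div_one]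
    calc ((p:ℝ)⁻¹)^2 * ‖QK‖ ≤ ((p:ℝ)⁻¹)^2 * 1 :=
          mul_le_mul_of_nonneg_left hQn (by positivity)
      _ = ((p:ℝ)⁻¹)^2 := mul_one _
  have hDmid : ‖∑ i ∈ Icc 2 (p-2), (((bernoulli i : ℚ) : ℚ_[p]) * (p.choose i : ℚ_[p]) * (2:ℚ_[p])^(p-i)
      - (-2) * (p:ℚ_[p]) * (((bernoulli i : ℚ) : ℚ_[p]) / ((i:ℚ_[p]) * 2^i)))‖ ≤ ((p:ℝ)⁻¹)^2 := by
    apply IsUltrametricDist.norm_sum_le_of_forall_le_of_nonneg (by positivity)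
    intro i hi
    rw [Finset.mem_Icc] at hi
    rcases Nat.even_or_odd i with hev | hod
    · -- even case
      have hne_i : ((i:ℚ_[p])) ≠ 0 := Nat.cast_ne_zero.mpr (by omega)
      have h2ne : ((2:ℚ_[p])) ≠ 0 := two_ne_zero
      have hci : ((i:ℚ_[p])) * ((p.choose i : ℕ) : ℚ_[p])
          = (p:ℚ_[p]) * (((p-1).choose (i-1) : ℕ) : ℚ_[p]) := by
        have hnat : p * ((p-1).choose (i-1)) = p.choose i * i := by
          have h := Nat.add_one_mul_choose_eq (p-1) (i-1)
          rwa [show p - 1 + 1 = p by omega,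
            show i - 1 + 1 = i by omega] at h
        have := congrArg (fun n : ℕ => (n : ℚ_[p])) hnat
        push_cast at this
        linear_combination -this
      have hpow2 : (2:ℚ_[p])^i * (2:ℚ_[p])^(p-i) = 2 * (2:ℚ_[p])^(p-1) := by
        rw [← pow_add, show i + (p - i) = p by omega]
        rw [show (2:ℚ_[p])^p = (2:ℚ_[p])^(p-1) * 2 by
          rw [← pow_succ, Nat.sub_add_cancel (by omega : 1 ≤ p)]]
        ring
      have hfact : ((bernoulli i : ℚ) : ℚ_[p]) * (p.choose i : ℚ_[p]) * (2:ℚ_[p])^(p-i)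
            - (-2) * (p:ℚ_[p]) * (((bernoulli i : ℚ) : ℚ_[p]) / ((i:ℚ_[p]) * 2^i))
          = (((bernoulli i : ℚ) : ℚ_[p]) / ((i:ℚ_[p]) * 2^i)) * ((p:ℚ_[p]) * 2)
            * ((((p-1).choose (i-1) : ℕ) : ℚ_[p]) * (2:ℚ_[p])^(p-1) + 1) := by
        field_simp
        linear_combination ((bernoulli i : ℚ) : ℚ_[p]) * (2:ℚ_[p]) * (2:ℚ_[p])^(p-1) * hci
          + ((bernoulli i : ℚ) : ℚ_[p]) * ((p.choose i : ℕ) : ℚ_[p]) * (i:ℚ_[p]) * hpow2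
      rw [hfact]
      have hb1 : ‖((bernoulli i : ℚ) : ℚ_[p]) / ((i:ℚ_[p]) * 2^i)‖ ≤ 1 := by
        rw [norm_div, norm_mul, norm_pow, h2u, one_pow, mul_one]
        rw [aux_norm_nat_unit p (show ¬ p ∣ i by
          intro hd; have := Nat.le_of_dvd (by omega) hd; omega), div_one]
        exact aux_bern p i (by omega) (by omega)
      have hb2 : ‖(p:ℚ_[p]) * 2‖ ≤ (p:ℝ)⁻¹ := by
        rw [norm_mul, Padic.norm_p, h2u, mul_one]
      have hb3 : ‖(((p-1).choose (i-1) : ℕ) : ℚ_[p]) * (2:ℚ_[p])^(p-1) + 1‖ ≤ (p:ℝ)⁻¹ := by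
        have hsplit3 : (((p-1).choose (i-1) : ℕ) : ℚ_[p]) * (2:ℚ_[p])^(p-1) + 1
            = ((((p-1).choose (i-1) : ℕ) : ℚ_[p]) + 1)
              + (((p-1).choose (i-1) : ℕ) : ℚ_[p]) * ((p:ℚ_[p]) * QK) := by
          rw [h2p1]; ring
        rw [hsplit3]
        apply aux_norm_add
        · have hdvd : (p:ℤ) ∣ (((p-1).choose (i-1) : ℕ) : ℤ) + 1 := by
            have hch := aux_choose p (i-1) (by omega)
            have hodd1 : Odd (i-1) := Nat.Even.sub_odd (by omega) hev odd_one
            rwa [hodd1.neg_one_pow, sub_neg_eq_add] at hch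
          have := aux_norm_int_dvd p hdvd
          push_cast at this
          exact this
        · rw [norm_mul, norm_mul, Padic.norm_p]
          calc ‖(((p-1).choose (i-1) : ℕ) : ℚ_[p])‖ * ((p:ℝ)⁻¹ * ‖QK‖)
              ≤ 1 * ((p:ℝ)⁻¹ * 1) := by
                apply mul_le_mul (aux_norm_nat p _) _ (by positivity) zero_le_one
                exact mul_le_mul_of_nonneg_left hQn (le_of_lt hppos)
            _ = (p:ℝ)⁻¹ := by ring
      calc ‖(((bernoulli i : ℚ) : ℚ_[p]) / ((i:ℚ_[p]) * 2^i)) * ((p:ℚ_[p]) * 2)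
            * ((((p-1).choose (i-1) : ℕ) : ℚ_[p]) * (2:ℚ_[p])^(p-1) + 1)‖
          ≤ 1 * (p:ℝ)⁻¹ * (p:ℝ)⁻¹ :=
            aux_norm_mul3 p zero_le_one (le_of_lt hppos) hb1 hb2 hb3
        _ = ((p:ℝ)⁻¹)^2 := by ring
    · -- odd case : bernoulli i = 0
      have hb0 : bernoulli i = 0 := by
        rw [bernoulli_eq_bernoulli'_of_ne_one (by omega : i ≠ 1)]
        exact bernoulli'_eq_zero_of_odd hod (by omega)
      rw [hb0]
      push_cast
      simp only [zero_mul, mul_zero, zero_div, sub_zero, zero_sub, norm_neg]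
      rw [norm_zero]
      positivity
  have hDtop : ‖2 * ((p:ℚ_[p]) * ((bernoulli (p-1) : ℚ) : ℚ_[p]) - ((p:ℚ_[p]) - 1)
      - ((Nat.factorial (p-1) : ℚ_[p]) + 1))‖ ≤ ((p:ℝ)⁻¹)^2 := by
    rw [norm_mul, h2u, one_mul]
    exact aux_L2 p h3
  have hkeyn : ‖(2:ℚ_[p]) * (p:ℚ_[p]) * (SK - QK - WK)‖ ≤ ((p:ℝ)⁻¹)^2 := by
    rw [key]
    exact aux_norm_add p _ _ (aux_norm_add p _ _ hQbound hDmid) hDtop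
  rw [norm_mul, norm_mul, h2u, one_mul, Padic.norm_p, sq] at hkeyn
  exact le_of_mul_le_mul_left hkeyn hppos

end Aux

theorem weighted_divided_bernoulli_sum_eq_fermat_plus_wilson
    (p : ℕ) (hp : p.Prime) (hodd : Odd p) :
    PadicDvd p 1 ((∑ k ∈ Finset.Icc 1 (p - 2), bernoulli k / ((k : ℚ) * 2 ^ k)) -
      (((2 : ℚ) ^ (p - 1) - 1) / p + (Nat.factorial (p - 1) + 1 : ℚ) / p)) := by
  haveI : Fact p.Prime := ⟨hp⟩
  have h3 : 3 ≤ p := by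
    have h1 := hp.two_le
    have h2 := Nat.odd_iff.mp hodd
    omega
  exact aux_conv p _ (aux_main p h3)
end

section
/- Let p be an odd prime. Then Σ_{m odd, 1 ≤ m ≤ p−2} H_m ≡ (1 + q_p(2))/2 (mod p), i.e. the sum of the harmonic numbers with odd index up to p−2 is congruent modulo p to one half of (1 plus the Fermat quotient of 2). -/
open Finset

section aux
variable {p : ℕ} [hp : Fact p.Prime]

lemma myCastNeZero {k : ℕ} (h1 : k ≠ 0) (h2 : k < p) : (k : ZMod p) ≠ 0 := by
  rw [Ne, ZMod.natCast_eq_zero_iff]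
  intro hd
  exact absurd (Nat.le_of_dvd (Nat.pos_of_ne_zero h1) hd) (by omega)

lemma myInvMul {k : ℕ} (h1 : k ≠ 0) (h2 : k < p) : (k : ZMod p) * (k : ZMod p)⁻¹ = 1 :=
  mul_inv_cancel₀ (myCastNeZero h1 h2)

lemma myCastSub {k : ℕ} (hk : k ≤ p) : ((p - k : ℕ) : ZMod p) = -(k : ZMod p) := by
  have hpk : p - k + k = p := by omega
  have h := congrArg (Nat.cast : ℕ → ZMod p) hpk
  push_cast at h
  rw [ZMod.natCast_self] at h
  linear_combination h

/-- `C(p-1, j) ≡ (-1)^j mod p`. -/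
lemma myChooseCast (j : ℕ) (hj : j ≤ p - 1) : (((p-1).choose j : ℕ) : ZMod p) = (-1)^j := by
  have hp2 : 2 ≤ p := hp.out.two_le
  induction j with
  | zero => simp
  | succ j ih =>
    have h1 : ((p-1).choose (j+1) * (j+1) : ℕ) = (p-1).choose j * (p - 1 - j) :=
      Nat.choose_succ_right_eq _ _
    have hcast : ((p - 1 - j : ℕ) : ZMod p) = -((j:ZMod p)+1) := by
      have hpj : p - 1 - j + (j + 1) = p := by omega
      have h2 := congrArg (Nat.cast : ℕ → ZMod p) hpj
      push_cast at h2
      rw [ZMod.natCast_self] at h2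
      linear_combination h2
    have h2 := congrArg (Nat.cast : ℕ → ZMod p) h1
    push_cast at h2
    rw [ih (by omega), hcast] at h2
    have hne : ((j:ZMod p)+1) ≠ 0 := by
      have := myCastNeZero (p := p) (k := j+1) (by omega) (by omega)
      push_cast at this; exact this
    apply mul_right_cancel₀ hne
    rw [h2]; ring

/-- `k·(C(p,k)/p) = C(p-1,k-1)` in ℕ. -/
lemma myKeyNat {k : ℕ} (h1 : 1 ≤ k) (h2 : k ≤ p - 1) :
    k * (p.choose k / p) = (p-1).choose (k-1) := by
  have hp2 : 2 ≤ p := hp.out.two_le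
  have hdvd : p ∣ p.choose k := hp.out.dvd_choose_self (by omega) (by omega)
  apply Nat.eq_of_mul_eq_mul_left (show 0 < p by omega)
  have hs := Nat.add_one_mul_choose_eq (p-1) (k-1)
  rw [show p - 1 + 1 = p by omega, show k - 1 + 1 = k by omega] at hs
  rw [hs]
  rw [mul_left_comm, Nat.mul_div_cancel' hdvd, mul_comm]

omit hp in
/-- Sum of `C(p,k)` over `1 ≤ k ≤ p-1` is `2^p - 2`. -/
lemma myChooseSum (hp2 : 2 ≤ p) : ∑ k ∈ Icc 1 (p-1), p.choose k = 2^p - 2 := by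
  have h := Nat.sum_range_choose p
  have hins : range (p+1) = insert 0 (insert p (Icc 1 (p-1))) := by
    ext a; simp [Finset.mem_Icc, Finset.mem_insert, Finset.mem_range]; omega
  rw [hins, Finset.sum_insert (by simp [Finset.mem_Icc, Finset.mem_insert]; omega),
    Finset.sum_insert (by simp [Finset.mem_Icc]; omega), Nat.choose_zero_right,
    Nat.choose_self] at h
  have h2 : 2 ≤ 2^p := by
    calc 2 = 2^1 := by norm_num
    _ ≤ 2^p := Nat.pow_le_pow_right (by norm_num) (by omega)
  omega

lemma mySumBk (q : ℕ) (hq : p * q = 2^(p-1) - 1) (hp2 : 2 ≤ p) :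
    ∑ k ∈ Icc 1 (p-1), (p.choose k / p) = 2 * q := by
  apply Nat.eq_of_mul_eq_mul_left (show 0 < p by omega)
  rw [Finset.mul_sum]
  have : ∀ k ∈ Icc 1 (p-1), p * (p.choose k / p) = p.choose k := by
    intro k hk
    simp only [Finset.mem_Icc] at hk
    exact Nat.mul_div_cancel' (hp.out.dvd_choose_self (by omega) (by omega))
  rw [Finset.sum_congr rfl this, myChooseSum hp2,
    show p * (2 * q) = 2 * (p * q) by ring, hq]
  have h1 : 1 ≤ 2^(p-1) := Nat.one_le_two_pow
  have h2 : 2^p = 2 * 2^(p-1) := by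
    rw [← pow_succ']
    congr 1
    omega
  omega

/-- count of odd numbers in `Icc k n`. -/
lemma myCountOdd (k n : ℕ) : ((Icc k n).filter (fun m => Odd m)).card = (n+1)/2 - k/2 := by
  induction n with
  | zero =>
    rcases Nat.eq_zero_or_pos k with rfl | hk
    · rw [Finset.Icc_self]
      simp [Finset.filter_singleton]
    · rw [Finset.Icc_eq_empty (by omega)]; simp
  | succ n ih =>
    rcases le_or_gt k (n+1) with hk | hk
    · rw [← Finset.insert_Icc_right_eq_Icc_add_one hk, Finset.filter_insert]
      have hmem : n+1 ∉ Icc k n := by simp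
      by_cases hodd : Odd (n+1)
      · rw [if_pos hodd, Finset.card_insert_of_notMem (fun hc => hmem (Finset.mem_of_mem_filter _ hc)), ih]
        rw [Nat.odd_iff] at hodd
        omega
      · rw [if_neg hodd, ih]
        rw [Nat.odd_iff] at hodd
        omega
    · rw [Finset.Icc_eq_empty (by omega)]; simp; omega

/-- (a) `∑_{k=1}^{p-1} 1/k ≡ 0 mod p`. -/
lemma myS0 (hodd : Odd p) : ∑ k ∈ Icc 1 (p-1), ((k : ZMod p))⁻¹ = 0 := by
  rw [Nat.odd_iff] at hodd
  apply Finset.sum_involution (fun k _ => p - k)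
  · intro a ha
    simp only [Finset.mem_Icc] at ha
    rw [myCastSub (by omega)]
    rw [inv_neg]
    ring
  · intro a ha _
    simp only [Finset.mem_Icc] at ha
    intro hc
    omega
  · intro a ha
    simp only [Finset.mem_Icc] at ha ⊢
    omega
  · intro a ha
    simp only [Finset.mem_Icc] at ha
    omega

/-- (b) alternating harmonic sum is `2q` mod `p`. -/
lemma myW (q : ℕ) (hq : p * q = 2^(p-1) - 1) :
    ∑ k ∈ Icc 1 (p-1), ((-1 : ZMod p))^(k-1) * ((k : ZMod p))⁻¹ = 2 * (q : ZMod p) := by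
  have hp2 : 2 ≤ p := hp.out.two_le
  have hterm : ∀ k ∈ Icc 1 (p-1),
      ((-1 : ZMod p))^(k-1) * ((k : ZMod p))⁻¹ = ((p.choose k / p : ℕ) : ZMod p) := by
    intro k hk
    simp only [Finset.mem_Icc] at hk
    have hkey := congrArg (Nat.cast : ℕ → ZMod p) (myKeyNat (p := p) hk.1 hk.2)
    push_cast at hkey
    rw [myChooseCast (k-1) (by omega)] at hkey
    have hk0 : (k : ZMod p) ≠ 0 := myCastNeZero (by omega) (by omega)
    calc ((-1 : ZMod p))^(k-1) * ((k : ZMod p))⁻¹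
        = ((k : ZMod p) * ((p.choose k / p : ℕ) : ZMod p)) * ((k : ZMod p))⁻¹ := by rw [hkey]
      _ = ((p.choose k / p : ℕ) : ZMod p) * ((k : ZMod p) * ((k : ZMod p))⁻¹) := by ring
      _ = _ := by rw [mul_inv_cancel₀ hk0, mul_one]
  rw [Finset.sum_congr rfl hterm, ← Nat.cast_sum, mySumBk q hq hp2]
  push_cast
  ring

/-- (c) sum of inverses of even numbers in `[1, p-1]` is `-q` mod `p`. -/
lemma myE' (q : ℕ) (hq : p * q = 2^(p-1) - 1) (hodd : Odd p) :
    ∑ k ∈ (Icc 1 (p-1)).filter (fun k => Even k), ((k : ZMod p))⁻¹ = -(q : ZMod p) := by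
  have hp2 : 2 ≤ p := hp.out.two_le
  have hsplitW := Finset.sum_filter_add_sum_filter_not (Icc 1 (p-1)) (fun k => Even k)
    (fun k => ((-1 : ZMod p))^(k-1) * ((k : ZMod p))⁻¹)
  have hsplitS := Finset.sum_filter_add_sum_filter_not (Icc 1 (p-1)) (fun k => Even k)
    (fun k => ((k : ZMod p))⁻¹)
  have hE : ∑ k ∈ (Icc 1 (p-1)).filter (fun k => Even k),
      ((-1 : ZMod p))^(k-1) * ((k : ZMod p))⁻¹
      = -∑ k ∈ (Icc 1 (p-1)).filter (fun k => Even k), ((k : ZMod p))⁻¹ := by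
    rw [← Finset.sum_neg_distrib]
    apply Finset.sum_congr rfl
    intro k hk
    simp only [Finset.mem_filter, Finset.mem_Icc] at hk
    have : Odd (k - 1) := Nat.Even.sub_odd (by omega) hk.2 (by norm_num)
    rw [this.neg_one_pow]
    ring
  have hO : ∑ k ∈ (Icc 1 (p-1)).filter (fun k => ¬ Even k),
      ((-1 : ZMod p))^(k-1) * ((k : ZMod p))⁻¹
      = ∑ k ∈ (Icc 1 (p-1)).filter (fun k => ¬ Even k), ((k : ZMod p))⁻¹ := by
    apply Finset.sum_congr rfl
    intro k hk
    simp only [Finset.mem_filter, Finset.mem_Icc] at hk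
    have : Even (k - 1) := by
      rw [Nat.even_iff] at hk ⊢
      rcases hk with ⟨⟨h1, h2⟩, h3⟩
      omega
    rw [this.neg_one_pow]
    ring
  rw [hE, hO] at hsplitW
  rw [myW q hq] at hsplitW
  rw [myS0 hodd] at hsplitS
  have h2ne : (2 : ZMod p) ≠ 0 := by
    have := myCastNeZero (p := p) (k := 2) (by omega) (by
      rw [Nat.odd_iff] at hodd; omega)
    push_cast at this
    exact this
  apply mul_left_cancel₀ h2ne
  linear_combination hsplitS - hsplitW

/-- (d) main congruence: `2 ∑_{m odd ≤ p-2} H_m ≡ 1 + q mod p`. -/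
lemma myMain (q : ℕ) (hq : p * q = 2^(p-1) - 1) (hodd : Odd p) :
    2 * ∑ m ∈ (Icc 1 (p-2)).filter (fun m => Odd m), ∑ k ∈ Icc 1 m, ((k : ZMod p))⁻¹
      = 1 + (q : ZMod p) := by
  have hp2 : 2 ≤ p := hp.out.two_le
  have hp3 : 3 ≤ p := by rw [Nat.odd_iff] at hodd; omega
  have hpodd : p % 2 = 1 := Nat.odd_iff.mp hodd
  -- step 1: extend inner sums to a common range
  have hstep1 : ∀ m ∈ (Icc 1 (p-2)).filter (fun m => Odd m),
      ∑ k ∈ Icc 1 m, ((k : ZMod p))⁻¹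
        = ∑ k ∈ Icc 1 (p-2), if k ≤ m then ((k : ZMod p))⁻¹ else 0 := by
    intro m hm
    simp only [Finset.mem_filter, Finset.mem_Icc] at hm
    rw [← Finset.sum_filter]
    congr 1
    ext a
    simp only [Finset.mem_Icc, Finset.mem_filter]
    omega
  rw [Finset.sum_congr rfl hstep1, Finset.sum_comm]
  -- step 2: inner sums are counts
  have hstep2 : ∀ k ∈ Icc 1 (p-2),
      ∑ m ∈ (Icc 1 (p-2)).filter (fun m => Odd m), (if k ≤ m then ((k : ZMod p))⁻¹ else 0)
        = ((p-1)/2 - k/2 : ℕ) • ((k : ZMod p))⁻¹ := by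
    intro k hk
    simp only [Finset.mem_Icc] at hk
    rw [← Finset.sum_filter, Finset.sum_const]
    congr 1
    have hfil : ((Icc 1 (p-2)).filter (fun m => Odd m)).filter (fun m => k ≤ m)
        = (Icc k (p-2)).filter (fun m => Odd m) := by
      ext m
      simp only [Finset.mem_filter, Finset.mem_Icc]
      constructor
      · rintro ⟨⟨⟨h1, h2⟩, h3⟩, h4⟩; exact ⟨⟨h4, h2⟩, h3⟩
      · rintro ⟨⟨h1, h2⟩, h3⟩; exact ⟨⟨⟨by omega, h2⟩, h3⟩, h1⟩
    rw [hfil, myCountOdd]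
    congr 1
    omega
  rw [Finset.sum_congr rfl hstep2, Finset.mul_sum]
  -- step 3: split by parity of k
  rw [← Finset.sum_filter_add_sum_filter_not (Icc 1 (p-2)) (fun k => Even k)]
  have heven : ∀ k ∈ (Icc 1 (p-2)).filter (fun k => Even k),
      2 * (((p-1)/2 - k/2 : ℕ) • ((k : ZMod p))⁻¹) = -((k : ZMod p))⁻¹ - 1 := by
    intro k hk
    simp only [Finset.mem_filter, Finset.mem_Icc, Nat.even_iff] at hk
    have h2c : (2 * ((p-1)/2 - k/2) : ℕ) = p - 1 - k := by omega
    rw [nsmul_eq_mul, ← mul_assoc]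
    rw [show (2 : ZMod p) * (((p-1)/2 - k/2 : ℕ) : ZMod p) = ((2 * ((p-1)/2 - k/2) : ℕ) : ZMod p) by push_cast; ring]
    rw [h2c, show p - 1 - k = p - (1 + k) by omega, myCastSub (by omega)]
    push_cast
    have hinv : (k : ZMod p) * ((k : ZMod p))⁻¹ = 1 := myInvMul (by omega) (by omega)
    linear_combination -hinv
  have hodd' : ∀ k ∈ (Icc 1 (p-2)).filter (fun k => ¬ Even k),
      2 * (((p-1)/2 - k/2 : ℕ) • ((k : ZMod p))⁻¹) = -1 := by
    intro k hk
    simp only [Finset.mem_filter, Finset.mem_Icc, Nat.even_iff] at hk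
    have h2c : (2 * ((p-1)/2 - k/2) : ℕ) = p - k := by omega
    rw [nsmul_eq_mul, ← mul_assoc]
    rw [show (2 : ZMod p) * (((p-1)/2 - k/2 : ℕ) : ZMod p) = ((2 * ((p-1)/2 - k/2) : ℕ) : ZMod p) by push_cast; ring]
    rw [h2c, myCastSub (by omega)]
    have hinv : (k : ZMod p) * ((k : ZMod p))⁻¹ = 1 := myInvMul (by omega) (by omega)
    linear_combination -hinv
  rw [Finset.sum_congr rfl heven, Finset.sum_congr rfl hodd']
  -- step 4: evaluate
  have hins : (Icc 1 (p-1)).filter (fun k => Even k)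
      = insert (p-1) ((Icc 1 (p-2)).filter (fun k => Even k)) := by
    ext a
    simp only [Finset.mem_filter, Finset.mem_Icc, Finset.mem_insert, Nat.even_iff]
    omega
  have hnotmem : (p-1) ∉ (Icc 1 (p-2)).filter (fun k => Even k) := by
    simp only [Finset.mem_filter, Finset.mem_Icc]
    omega
  have hE2 : ∑ k ∈ (Icc 1 (p-2)).filter (fun k => Even k), ((k : ZMod p))⁻¹
      = -(q : ZMod p) + 1 := by
    have h := myE' q hq hodd
    rw [hins, Finset.sum_insert hnotmem] at h
    have hm1 : (((p-1 : ℕ)) : ZMod p)⁻¹ = -1 := by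
      rw [myCastSub (by omega)]
      push_cast
      rw [inv_neg, inv_one]
    rw [hm1] at h
    linear_combination h
  rw [Finset.sum_sub_distrib, Finset.sum_neg_distrib, hE2,
    Finset.sum_const, Finset.sum_const]
  have hcards : ((Icc 1 (p-2)).filter (fun k => Even k)).card
      + ((Icc 1 (p-2)).filter (fun k => ¬ Even k)).card = p - 2 := by
    rw [Finset.card_filter_add_card_filter_not]
    simp
  have hcast2 : ((((Icc 1 (p-2)).filter (fun k => Even k)).card : ZMod p))
      + ((((Icc 1 (p-2)).filter (fun k => ¬ Even k)).card : ZMod p)) = -2 := by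
    rw [← Nat.cast_add, hcards, myCastSub (by omega)]
    push_cast
    ring
  rw [nsmul_eq_mul, nsmul_eq_mul, mul_one]
  linear_combination -hcast2
end aux

/-- The `m`-th harmonic number `H_m = 1 + 1/2 + ... + 1/m`. -/
def harmonic' (m : ℕ) : ℚ := ∑ k ∈ Finset.Icc 1 m, (1 : ℚ) / k

theorem sum_odd_index_harmonic_eq_half_one_plus_fermat_quotient
    (p : ℕ) (hp : p.Prime) (hodd : Odd p) :
    PadicDvd p 1 ((∑ m ∈ (Finset.Icc 1 (p - 2)).filter (fun m => Odd m), harmonic' m) -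
      (1 + ((2 : ℚ) ^ (p - 1) - 1) / p) / 2) := by
  haveI : Fact p.Prime := ⟨hp⟩
  have hp2 : 2 ≤ p := hp.two_le
  have hpodd : p % 2 = 1 := Nat.odd_iff.mp hodd
  have hp3 : 3 ≤ p := by omega
  have h2ne : (2 : ZMod p) ≠ 0 := by
    have := myCastNeZero (p := p) (k := 2) (by omega) (by omega)
    push_cast at this
    exact this
  -- the Fermat quotient as a natural number
  have h1le : (1 : ℕ) ≤ 2^(p-1) := Nat.one_le_two_pow
  have hdvd : p ∣ 2^(p-1) - 1 := by
    rw [← ZMod.natCast_eq_zero_iff, Nat.cast_sub h1le]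
    push_cast
    rw [ZMod.pow_card_sub_one_eq_one h2ne]
    ring
  have hq : p * ((2^(p-1) - 1) / p) = 2^(p-1) - 1 := Nat.mul_div_cancel' hdvd
  set q : ℕ := (2^(p-1) - 1) / p with hqdef
  -- clear denominators: the harmonic sums as fractions over f = (p-2)!
  set f : ℕ := (p-2).factorial with hfdef
  have hfne : f ≠ 0 := Nat.factorial_ne_zero _
  have hf0 : (f : ℚ) ≠ 0 := Nat.cast_ne_zero.mpr hfne
  have hH : ∀ m ∈ (Finset.Icc 1 (p-2)).filter (fun m => Odd m),
      harmonic' m = ((∑ k ∈ Icc 1 m, (f / k) : ℕ) : ℚ) / f := by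
    intro m hm
    simp only [mem_filter, mem_Icc] at hm
    rw [harmonic', Nat.cast_sum, Finset.sum_div]
    apply Finset.sum_congr rfl
    intro k hk
    simp only [mem_Icc] at hk
    have hkd : k ∣ f := Nat.dvd_factorial (by omega) (by omega)
    have hkf : k * (f / k) = f := Nat.mul_div_cancel' hkd
    have hk0 : (k : ℚ) ≠ 0 := Nat.cast_ne_zero.mpr (by omega)
    rw [div_eq_div_iff hk0 hf0, one_mul]
    have hc := congrArg (Nat.cast : ℕ → ℚ) hkf
    push_cast at hc
    linear_combination -hc
  set A : ℕ := ∑ m ∈ (Finset.Icc 1 (p-2)).filter (fun m => Odd m), ∑ k ∈ Icc 1 m, (f / k)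
    with hAdef
  have hsum : ∑ m ∈ (Finset.Icc 1 (p-2)).filter (fun m => Odd m), harmonic' m = (A : ℚ) / f := by
    rw [Finset.sum_congr rfl hH, hAdef, Nat.cast_sum, Finset.sum_div]
  have hp0 : (p : ℚ) ≠ 0 := Nat.cast_ne_zero.mpr (by omega)
  have hqQ : ((2 : ℚ)^(p-1) - 1) / p = (q : ℚ) := by
    have hc := congrArg (Nat.cast : ℕ → ℚ) hq
    push_cast [h1le] at hc
    rw [div_eq_iff hp0]
    linear_combination -hc
  -- write the difference as n / d
  have hx : (∑ m ∈ (Finset.Icc 1 (p-2)).filter (fun m => Odd m), harmonic' m) -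
      (1 + ((2 : ℚ)^(p-1) - 1) / p) / 2
      = ((2 * A - f * (1 + q) : ℤ) : ℚ) / ((2 * f : ℤ) : ℚ) := by
    rw [hsum, hqQ]
    push_cast
    field_simp
  rw [hx]
  -- p divides the numerator
  have hpn : (p : ℤ) ∣ (2 * A - f * (1 + q) : ℤ) := by
    rw [← ZMod.intCast_zmod_eq_zero_iff_dvd]
    have key := myMain (p := p) q hq hodd
    have hA : (A : ZMod p) = (f : ZMod p) *
        ∑ m ∈ (Finset.Icc 1 (p-2)).filter (fun m => Odd m),
          ∑ k ∈ Icc 1 m, ((k : ZMod p))⁻¹ := by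
      rw [hAdef, Nat.cast_sum, Finset.mul_sum]
      apply Finset.sum_congr rfl
      intro m hm
      rw [Nat.cast_sum, Finset.mul_sum]
      apply Finset.sum_congr rfl
      intro k hk
      simp only [mem_filter, mem_Icc] at hm hk
      have hkd : k ∣ f := Nat.dvd_factorial (by omega) (by omega)
      have hkf : k * (f / k) = f := Nat.mul_div_cancel' hkd
      have hc := congrArg (Nat.cast : ℕ → ZMod p) hkf
      have hk0 : (k : ZMod p) ≠ 0 := myCastNeZero (by omega) (by omega)
      have hinv : (k : ZMod p) * ((k : ZMod p))⁻¹ = 1 := mul_inv_cancel₀ hk0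
      apply mul_left_cancel₀ hk0
      push_cast at hc
      rw [hc]
      linear_combination -(f : ZMod p) * hinv
    push_cast
    rw [hA]
    linear_combination (f : ZMod p) * key
  -- p does not divide the denominator
  have hpd : ¬ (p : ℤ) ∣ (2 * f : ℤ) := by
    intro hcon
    have h2f : p ∣ 2 * f := by exact_mod_cast hcon
    rcases (Nat.Prime.dvd_mul hp).mp h2f with h | h
    · have := Nat.le_of_dvd (by norm_num) h
      omega
    · have := (Nat.Prime.dvd_factorial hp).mp h
      omega
  rcases eq_or_ne (2 * A - f * (1 + q) : ℤ) 0 with hn0 | hn0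
  · exact Or.inl (by rw [hn0]; simp)
  · refine Or.inr ?_
    have hnQ : ((2 * A - f * (1 + q) : ℤ) : ℚ) ≠ 0 := Int.cast_ne_zero.mpr hn0
    have hdQ : ((2 * f : ℤ) : ℚ) ≠ 0 := by
      apply Int.cast_ne_zero.mpr
      positivity
    rw [padicValRat.div hnQ hdQ, padicValRat.of_int, padicValRat.of_int]
    have h1 : 1 ≤ padicValInt p (2 * A - f * (1 + q) : ℤ) := by
      rcases (padicValInt_dvd_iff 1 _).mp (by simpa using hpn) with h | h
      · exact absurd h hn0
      · exact h
    have h2 : padicValInt p (2 * f : ℤ) = 0 := padicValInt.eq_zero_of_not_dvd hpd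
    omega
end
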